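/- arXiv:1307.7304 — 10 statements merged into one kernel-verified Lean document; each statement's English description precedes it below -/
import Mathlib

section
/- Let A be a finite dimensional G-graded algebra and σ ∈ G. Then A(σ) ≅ A* as graded left A-modules if and only if (σ)A ≅ A* as graded right A-modules. -/
/-- The degree-`g` component of the dual of a `G`-graded module:
`(M*)_g = { f | f(M_h) = 0 for all h ≠ g⁻¹ }`. -/
def dualComponent {k M : Type*} [Field k] [AddCommGroup M] [Module k M]
    {G : Type*} [Group G] (ℳ : G → Submodule k M) (g : G) :
    Submodule k (Module.Dual k M) where
  carrier := {f | ∀ h : G, h ≠ g⁻¹ → ∀ x ∈ ℳ h, f x = 0}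
  zero_mem' := by intro h hh x hx; rfl
  add_mem' := by
    intro f₁ f₂ h₁ h₂ h hh x hx
    simp [h₁ h hh x hx, h₂ h hh x hx]
  smul_mem' := by
    intro c f hf h hh x hx
    simp [hf h hh x hx]

/-- `A` is `σ`-graded Frobenius: there is an isomorphism `A(σ) ≅ A*` of graded left
`A`-modules, where `A*` is a left `A`-module via `(a • f) y = f (y * a)` and is graded by
`(A*)_g = { f | f(A_h)=0 for h ≠ g⁻¹ }`, and `A(σ)_g = A_{gσ}`. -/
def IsSigmaGradedFrobenius {k A : Type*} [Field k] [Ring A] [Algebra k A]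
    {G : Type*} [Group G] (𝒜 : G → Submodule k A) (σ : G) : Prop :=
  ∃ φ : A ≃ₗ[k] Module.Dual k A,
    (∀ a x y : A, φ (a * x) y = φ x (y * a)) ∧
    ∀ g : G, ∀ x ∈ 𝒜 (g * σ), φ x ∈ dualComponent 𝒜 g

/-- `A` is right `σ`-graded Frobenius: there is an isomorphism `(σ)A ≅ A*` of graded right
`A`-modules, where `A*` is a right `A`-module via `(f • a) y = f (a * y)` and
`((σ)A)_g = A_{σg}`. -/
def IsSigmaGradedFrobeniusRight {k A : Type*} [Field k] [Ring A] [Algebra k A]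
    {G : Type*} [Group G] (𝒜 : G → Submodule k A) (σ : G) : Prop :=
  ∃ ψ : A ≃ₗ[k] Module.Dual k A,
    (∀ a x y : A, ψ (x * a) y = ψ x (a * y)) ∧
    ∀ g : G, ∀ x ∈ 𝒜 (σ * g), ψ x ∈ dualComponent 𝒜 g

/-- for a finite dimensional `G`-graded algebra `A` and `σ ∈ G`,
`A(σ) ≅ A*` as graded left `A`-modules iff `(σ)A ≅ A*` as graded right `A`-modules. -/
theorem sigmaGradedFrobenius_left_iff_right
    {k A : Type*} [Field k] [Ring A] [Algebra k A] [FiniteDimensional k A]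
    {G : Type*} [Group G] [DecidableEq G]
    (𝒜 : G → Submodule k A)
    (hinternal : DirectSum.IsInternal 𝒜)
    (hone : (1 : A) ∈ 𝒜 1)
    (hmul : ∀ {g h : G}, ∀ a ∈ 𝒜 g, ∀ b ∈ 𝒜 h, a * b ∈ 𝒜 (g * h))
    (σ : G) :
    IsSigmaGradedFrobenius 𝒜 σ ↔ IsSigmaGradedFrobeniusRight 𝒜 σ := by
  constructor
  · rintro ⟨φ, hφ, hgr⟩
    refine ⟨(Module.evalEquiv k A).trans φ.dualMap, ?_, ?_⟩
    · intro a x y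
      have : φ y (x * a) = φ (a * y) x := (hφ a y x).symm
      simpa [Module.evalEquiv, Module.Dual.eval] using this
    · intro g x hx h hh y hy
      have hne : σ * g ≠ (h * σ⁻¹)⁻¹ := by
        simp only [mul_inv_rev, inv_inv]
        intro e
        apply hh
        rw [mul_left_cancel e]
        simp
      have hy' : y ∈ 𝒜 ((h * σ⁻¹) * σ) := by simpa using hy
      have := hgr (h * σ⁻¹) y hy' (σ * g) hne x hx
      simpa [Module.evalEquiv, Module.Dual.eval] using this
  · rintro ⟨ψ, hψ, hgr⟩
    refine ⟨(Module.evalEquiv k A).trans ψ.dualMap, ?_, ?_⟩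
    · intro a x y
      have h2 : ψ (y * a) x = ψ y (a * x) := hψ a y x
      simpa [Module.evalEquiv, Module.Dual.eval] using h2.symm
    · intro g x hx h hh y hy
      have hne : g * σ ≠ (σ⁻¹ * h)⁻¹ := by
        simp only [mul_inv_rev, inv_inv]
        intro e
        apply hh
        rw [mul_right_cancel e]
        simp
      have hy' : y ∈ 𝒜 (σ * (σ⁻¹ * h)) := by simpa using hy
      have := hgr (σ⁻¹ * h) y hy' (g * σ) hne x hx
      simpa [Module.evalEquiv, Module.Dual.eval] using this
end

section
/- If A is a finite dimensional G-graded algebra which is σ-graded Frobenius and H is a subgroup of G containing σ, then the subalgebra A_H = ⊕_{g∈H} A_g is σ-graded Frobenius as an H-graded algebra. -/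
theorem gradedSub_mul_mem {k A : Type*} [Field k] [Ring A] [Algebra k A]
    {G : Type*} [Group G] (𝒜 : G → Submodule k A)
    (hmul : ∀ {g h : G}, ∀ a ∈ 𝒜 g, ∀ b ∈ 𝒜 h, a * b ∈ 𝒜 (g * h))
    (H : Subgroup G) {a b : A}
    (ha : a ∈ (⨆ h : H, 𝒜 (h : G) : Submodule k A))
    (hb : b ∈ (⨆ h : H, 𝒜 (h : G) : Submodule k A)) :
    a * b ∈ (⨆ h : H, 𝒜 (h : G) : Submodule k A) := by
  have key : ∀ (g : H), ∀ x ∈ 𝒜 (g : G),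
      x * b ∈ (⨆ h : H, 𝒜 (h : G) : Submodule k A) := by
    intro g x hx
    refine Submodule.iSup_induction (fun h : H => 𝒜 (h : G))
      (motive := fun y => x * y ∈ (⨆ h : H, 𝒜 (h : G) : Submodule k A)) hb ?_ ?_ ?_
    · intro h y hy
      exact Submodule.mem_iSup_of_mem (g * h) (hmul x hx y hy)
    · simp
    · intro y z hy hz
      simpa [mul_add] using add_mem hy hz
  refine Submodule.iSup_induction (fun h : H => 𝒜 (h : G))
    (motive := fun y => y * b ∈ (⨆ h : H, 𝒜 (h : G) : Submodule k A)) ha ?_ ?_ ?_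
  · intro g x hx
    exact key g x hx
  · simp
  · intro y z hy hz
    simpa [add_mul] using add_mem hy hz

theorem gradedSub_algebraMap_mem {k A : Type*} [Field k] [Ring A] [Algebra k A]
    {G : Type*} [Group G] (𝒜 : G → Submodule k A)
    (hone : (1 : A) ∈ 𝒜 1) (H : Subgroup G) (r : k) :
    algebraMap k A r ∈ (⨆ h : H, 𝒜 (h : G) : Submodule k A) := by
  have h1 : (1 : A) ∈ 𝒜 (((1 : H) : G)) := by
    rw [OneMemClass.coe_one]; exact hone
  rw [Algebra.algebraMap_eq_smul_one]
  exact Submodule.smul_mem _ r (Submodule.mem_iSup_of_mem (1 : H) h1)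

/-- The subalgebra `A_H = ⊕_{h ∈ H} A_h` of a `G`-graded algebra, for a subgroup `H ≤ G`. -/
def gradedSubalgebra {k A : Type*} [Field k] [Ring A] [Algebra k A]
    {G : Type*} [Group G] (𝒜 : G → Submodule k A)
    (hone : (1 : A) ∈ 𝒜 1)
    (hmul : ∀ {g h : G}, ∀ a ∈ 𝒜 g, ∀ b ∈ 𝒜 h, a * b ∈ 𝒜 (g * h))
    (H : Subgroup G) : Subalgebra k A where
  carrier := (⨆ h : H, 𝒜 (h : G) : Submodule k A)
  add_mem' := fun ha hb => add_mem ha hb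
  mul_mem' := fun ha hb => gradedSub_mul_mem 𝒜 hmul H ha hb
  algebraMap_mem' := fun r => gradedSub_algebraMap_mem 𝒜 hone H r

/-- if a finite dimensional `G`-graded algebra `A` is `σ`-graded Frobenius
and `H` is a subgroup of `G` containing `σ`, then `A_H = ⊕_{g ∈ H} A_g` is `σ`-graded
Frobenius as an `H`-graded algebra (graded by the components `A_h`, `h ∈ H`). -/
theorem gradedSubalgebra_sigmaGradedFrobenius
    {k A : Type*} [Field k] [Ring A] [Algebra k A] [FiniteDimensional k A]
    {G : Type*} [Group G] [DecidableEq G]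
    (𝒜 : G → Submodule k A)
    (hinternal : DirectSum.IsInternal 𝒜)
    (hone : (1 : A) ∈ 𝒜 1)
    (hmul : ∀ {g h : G}, ∀ a ∈ 𝒜 g, ∀ b ∈ 𝒜 h, a * b ∈ 𝒜 (g * h))
    (σ : G) (H : Subgroup G) (hσ : σ ∈ H)
    (hFrob : IsSigmaGradedFrobenius 𝒜 σ) :
    IsSigmaGradedFrobenius
      (fun h : H =>
        (𝒜 (h : G)).comap (gradedSubalgebra 𝒜 hone hmul H).val.toLinearMap)
      (⟨σ, hσ⟩ : H) := by
  classical
  obtain ⟨φ, hφmul, hφgr⟩ := hFrob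
  set B := gradedSubalgebra 𝒜 hone hmul H with hBdef
  -- φ of elements of B vanishes on components outside H
  have hvanish : ∀ b : B, ∀ g : G, g ∉ H → ∀ x ∈ 𝒜 g, φ (b : A) x = 0 := by
    intro b g hg x hx
    have hb : (b : A) ∈ (⨆ h : H, 𝒜 (h : G) : Submodule k A) := b.2
    refine Submodule.iSup_induction (fun h : H => 𝒜 (h : G))
      (motive := fun a => φ a x = 0) hb ?_ ?_ ?_
    · intro h a ha
      have hmem : a ∈ 𝒜 (((h : G) * σ⁻¹) * σ) := by simpa using ha
      have hdc := hφgr ((h : G) * σ⁻¹) a hmem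
      refine hdc g ?_ x hx
      intro he
      apply hg
      rw [he]
      simpa using H.mul_mem hσ (H.inv_mem h.2)
    · simp
    · intro y z hy hz
      simp [hy, hz]
  let ψ : B →ₗ[k] Module.Dual k B :=
    (B.val.toLinearMap.dualMap).comp (φ.toLinearMap.comp B.val.toLinearMap)
  have hψ : ∀ (x y : B), ψ x y = φ (x : A) (y : A) := fun _ _ => rfl
  have hsup : (⨆ g : G, 𝒜 g) = ⊤ := hinternal.submodule_iSup_eq_top
  have hinj : Function.Injective ψ := by
    refine (injective_iff_map_eq_zero ψ).mpr ?_
    intro x hx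
    have hzero : φ (x : A) = 0 := by
      ext a
      have ha : a ∈ (⨆ g : G, 𝒜 g) := hsup ▸ Submodule.mem_top
      refine Submodule.iSup_induction 𝒜 (motive := fun a => φ (x : A) a = 0) ha ?_ ?_ ?_
      · intro g y hy
        by_cases hg : g ∈ H
        · have hyB : y ∈ B :=
            Submodule.mem_iSup_of_mem (⟨g, hg⟩ : H) hy
          have := congrArg (fun f => f (⟨y, hyB⟩ : B)) hx
          simpa [hψ] using this
        · exact hvanish x g hg y hy
      · simp
      · intro y z hy hz; simp [hy, hz]
    have : (x : A) = 0 := by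
      apply φ.injective
      simp [hzero]
    exact Subtype.ext this
  have hfr : Module.finrank k B = Module.finrank k (Module.Dual k B) :=
    (Subspace.dual_finrank_eq).symm
  refine ⟨ψ.linearEquivOfInjective hinj hfr, ?_, ?_⟩
  · intro a x y
    simp only [LinearMap.linearEquivOfInjective_apply, hψ]
    have : ((a * x : B) : A) = (a : A) * (x : A) := rfl
    rw [this, hφmul]
    rfl
  · intro h x hx
    have hx' : (x : A) ∈ 𝒜 ((h : G) * σ) := hx
    have hdc := hφgr (h : G) (x : A) hx'
    intro h' hne y hy
    simp only [LinearMap.linearEquivOfInjective_apply, hψ]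
    refine hdc (h' : G) ?_ (y : A) hy
    intro he
    apply hne
    apply Subtype.coe_injective
    simpa using he
end

section
/- Let A be a finite dimensional G-graded algebra that is σ-graded Frobenius, and let τ ∈ G. Then A is τ-graded Frobenius if and only if τ ∈ σ·G{A}, where G{A} = { g ∈ G | A(g) ≅ A as graded left A-modules } is the inertia group of A. -/

private lemma key {k A : Type*} [Field k] [AddCommGroup A] [Module k A]
    {G : Type*} [Group G] [DecidableEq G]
    (𝒜 : G → Submodule k A) (hinternal : DirectSum.IsInternal 𝒜)
    (φ : A ≃ₗ[k] Module.Dual k A) (σ : G)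
    (hgr : ∀ g : G, ∀ x ∈ 𝒜 (g * σ), φ x ∈ dualComponent 𝒜 g)
    (g : G) (f : Module.Dual k A) (hf : f ∈ dualComponent 𝒜 g) :
    φ.symm f ∈ 𝒜 (g * σ) := by
  classical
  obtain ⟨d, hd⟩ := hinternal.surjective (φ.symm f)
  have hx : φ.symm f = ∑ i ∈ d.support, (d i : A) := by
    rw [← hd]
    conv_lhs => rw [← DirectSum.sum_support_of d]
    rw [map_sum]
    exact Finset.sum_congr rfl fun i _ => DirectSum.coeAddMonoidHom_of 𝒜 i (d i)
  have hfe : f = φ (d (g * σ)) := by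
    have hker : ∀ h'' : G, 𝒜 h'' ≤ LinearMap.ker (f - φ (d (g * σ))) := by
      intro h'' z hz
      simp only [LinearMap.mem_ker, LinearMap.sub_apply, sub_eq_zero]
      by_cases hne : h'' = g⁻¹
      · subst hne
        have hfz : f z = ∑ i ∈ d.support, φ (d i) z := by
          conv_lhs => rw [← φ.apply_symm_apply f, hx]
          simp
        rw [hfz]
        refine Finset.sum_eq_single _ (fun i _ hi => ?_) (fun hi => ?_)
        · have : (d i : A) ∈ 𝒜 ((i * σ⁻¹) * σ) := by
            simpa using (d i).2
          refine hgr (i * σ⁻¹) _ this g⁻¹ ?_ z hz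
          simp only [mul_inv_rev, inv_inv, ne_eq]
          intro h
          apply hi
          have h2 : g = i * σ⁻¹ := by rw [← inv_inv g, h, mul_inv_rev, inv_inv]
          rw [h2]; group
        · rw [DFinsupp.notMem_support_iff.mp hi]; simp
      · rw [hf h'' hne z hz,
          hgr g _ (d (g * σ)).2 h'' hne z hz]
    have : LinearMap.ker (f - φ (d (g * σ))) = ⊤ := by
      rw [eq_top_iff, ← hinternal.submodule_iSup_eq_top]
      exact iSup_le hker
    exact sub_eq_zero.mp (LinearMap.ker_eq_top.mp this)
  rw [hfe, φ.symm_apply_apply]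
  exact (d (g * σ)).2

/-- if a finite dimensional `G`-graded algebra `A` is `σ`-graded Frobenius
and `τ ∈ G`, then `A` is `τ`-graded Frobenius iff `τ ∈ σ·G{A}`, where
`G{A} = { g | A(g) ≅ A as graded left A-modules }` is the inertia group of `A`. -/
theorem tauGradedFrobenius_iff_mem_inertia
    {k A : Type*} [Field k] [Ring A] [Algebra k A] [FiniteDimensional k A]
    {G : Type*} [Group G] [DecidableEq G]
    (𝒜 : G → Submodule k A)
    (hinternal : DirectSum.IsInternal 𝒜)
    (hone : (1 : A) ∈ 𝒜 1)
    (hmul : ∀ {g h : G}, ∀ a ∈ 𝒜 g, ∀ b ∈ 𝒜 h, a * b ∈ 𝒜 (g * h))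
    (σ τ : G)
    (hFrob : IsSigmaGradedFrobenius 𝒜 σ) :
    IsSigmaGradedFrobenius 𝒜 τ ↔
      ∃ g : G,
        (∃ ψ : A ≃ₗ[k] A,
          (∀ a x : A, ψ (a * x) = a * ψ x) ∧
          (∀ g' : G, ∀ x ∈ 𝒜 (g' * g), ψ x ∈ 𝒜 g')) ∧
        τ = σ * g := by
  obtain ⟨φ, hφmul, hφgr⟩ := hFrob
  constructor
  · rintro ⟨φ', hφ'mul, hφ'gr⟩
    refine ⟨σ⁻¹ * τ, ⟨φ'.trans φ.symm, ?_, ?_⟩, by group⟩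
    · intro a x
      apply φ.injective
      apply LinearMap.ext
      intro y
      have h1 : φ ((φ'.trans φ.symm) (a * x)) y = φ' x (y * a) := by
        simp [hφ'mul a x y]
      have h2 : φ (a * (φ'.trans φ.symm) x) y = φ' x (y * a) := by
        rw [hφmul a _ y]
        simp
      rw [h1, h2]
    · intro g' x hx
      have hx' : x ∈ 𝒜 ((g' * σ⁻¹) * τ) := by
        have he : g' * (σ⁻¹ * τ) = (g' * σ⁻¹) * τ := by group
        rwa [he] at hx
      have hkey := key 𝒜 hinternal φ σ hφgr (g' * σ⁻¹) (φ' x)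
        (hφ'gr (g' * σ⁻¹) x hx')
      have he : g' * σ⁻¹ * σ = g' := by group
      rw [he] at hkey
      exact hkey
  · rintro ⟨g, ⟨ψ, hψmul, hψgr⟩, rfl⟩
    refine ⟨ψ.trans φ, ?_, ?_⟩
    · intro a x y
      simp only [LinearEquiv.trans_apply, hψmul]
      exact hφmul a (ψ x) y
    · intro g' x hx
      have hx' : x ∈ 𝒜 ((g' * σ) * g) := by
        have he : g' * (σ * g) = (g' * σ) * g := by group
        rwa [he] at hx
      exact hφgr g' (ψ x) (hψgr (g' * σ) x hx')
end

section
/- Let A be a G-graded algebra and H a normal subgroup of G. If A is graded Frobenius as a G-graded algebra, then A, equipped with the induced G/H-grading A_{ĝ} = ⊕_{g ∈ ĝ} A_g, is graded Frobenius as a G/H-graded algebra. -/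
/-- if `A` is graded Frobenius as a `G`-graded algebra and `H` is a normal
subgroup of `G`, then `A` with the induced `G/H`-grading `A_ĝ = ⊕_{g ∈ ĝ} A_g` is
graded Frobenius as a `G/H`-graded algebra.  (Graded Frobenius = `1`-graded Frobenius,
i.e. `A ≅ A*` as graded left `A`-modules.) -/
theorem quotientGrading_gradedFrobenius
    {k A : Type*} [Field k] [Ring A] [Algebra k A] [FiniteDimensional k A]
    {G : Type*} [Group G] [DecidableEq G]
    (𝒜 : G → Submodule k A)
    (hinternal : DirectSum.IsInternal 𝒜)
    (hone : (1 : A) ∈ 𝒜 1)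
    (hmul : ∀ {g h : G}, ∀ a ∈ 𝒜 g, ∀ b ∈ 𝒜 h, a * b ∈ 𝒜 (g * h))
    (H : Subgroup G) [H.Normal]
    (hFrob : IsSigmaGradedFrobenius 𝒜 (1 : G)) :
    IsSigmaGradedFrobenius
      (fun q : G ⧸ H => ⨆ g ∈ {g : G | (g : G ⧸ H) = q}, 𝒜 g)
      (1 : G ⧸ H) := by
  obtain ⟨φ, hmod, hgr⟩ := hFrob
  refine ⟨φ, hmod, fun q x hx => ?_⟩
  simp only [mul_one] at hx
  have hle : (⨆ g ∈ {g : G | (g : G ⧸ H) = q}, 𝒜 g) ≤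
      (dualComponent (fun q : G ⧸ H =>
        ⨆ g ∈ {g : G | (g : G ⧸ H) = q}, 𝒜 g) q).comap φ.toLinearMap := by
    refine iSup₂_le fun g hg => ?_
    intro x hx
    show φ x ∈ dualComponent _ q
    intro h' hh' y hy
    have hxg : φ x ∈ dualComponent 𝒜 g := hgr g x (by simpa using hx)
    have hker : (⨆ h ∈ {h : G | (h : G ⧸ H) = h'}, 𝒜 h) ≤
        LinearMap.ker (φ x) := by
      refine iSup₂_le fun h hh => ?_
      intro y hy
      refine hxg h (fun heq => hh' ?_) y hy
      rw [← hh, heq, ← hg]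
      simp [QuotientGroup.mk_inv]
    exact hker hy
  exact hle hx
end

section
/- A finite dimensional G-graded algebra A is σ-graded Frobenius if and only if there exists a non-degenerate associative bilinear form B : A × A → k such that B(r_τ, r_μ) = 0 for all homogeneous r_τ ∈ A_τ, r_μ ∈ A_μ with τμ ≠ σ. -/
/-- a finite dimensional `G`-graded algebra `A` is `σ`-graded Frobenius iff
there is a non-degenerate associative bilinear form `B : A × A → k` with
`B(r_τ, r_μ) = 0` for all homogeneous `r_τ ∈ A_τ`, `r_μ ∈ A_μ` with `τμ ≠ σ`. -/
theorem sigmaGradedFrobenius_iff_bilinearForm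
    {k A : Type*} [Field k] [Ring A] [Algebra k A] [FiniteDimensional k A]
    {G : Type*} [Group G] [DecidableEq G]
    (𝒜 : G → Submodule k A)
    (hinternal : DirectSum.IsInternal 𝒜)
    (hone : (1 : A) ∈ 𝒜 1)
    (hmul : ∀ {g h : G}, ∀ a ∈ 𝒜 g, ∀ b ∈ 𝒜 h, a * b ∈ 𝒜 (g * h))
    (σ : G) :
    IsSigmaGradedFrobenius 𝒜 σ ↔
      ∃ B : A →ₗ[k] A →ₗ[k] k,
        (∀ x : A, (∀ y : A, B x y = 0) → x = 0) ∧
        (∀ y : A, (∀ x : A, B x y = 0) → y = 0) ∧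
        (∀ x y z : A, B (x * y) z = B x (y * z)) ∧
        (∀ τ μ : G, τ * μ ≠ σ → ∀ x ∈ 𝒜 τ, ∀ y ∈ 𝒜 μ, B x y = 0) := by
  constructor
  · rintro ⟨φ, hassoc, hgrade⟩
    refine ⟨(φ : A →ₗ[k] Module.Dual k A).flip, ?_, ?_, ?_, ?_⟩
    · intro x hx
      have : ∀ f : Module.Dual k A, f x = 0 := by
        intro f
        obtain ⟨y, rfl⟩ := φ.surjective f
        exact hx y
      exact (Module.forall_dual_apply_eq_zero_iff k x).mp this
    · intro y hy
      apply φ.injective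
      ext x
      simpa using hy x
    · intro x y z
      simp only [LinearMap.flip_apply, LinearEquiv.coe_coe]
      have h1 : φ z (x * y) = φ (y * z) x := by
        have := hassoc y z x
        rw [this]
      exact h1.symm ▸ rfl
    · intro τ μ hτμ x hx y hy
      simp only [LinearMap.flip_apply, LinearEquiv.coe_coe]
      have hy' : y ∈ 𝒜 ((μ * σ⁻¹) * σ) := by simpa using hy
      have := hgrade (μ * σ⁻¹) y hy'
      refine this τ ?_ x hx
      intro h
      apply hτμ
      rw [h]
      group
  · rintro ⟨B, hndl, hndr, hassoc, hgrade⟩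
    have hinj : Function.Injective B.flip := by
      rw [← LinearMap.ker_eq_bot, LinearMap.ker_eq_bot']
      intro y hy
      apply hndr
      intro x
      have := congrFun (congrArg DFunLike.coe hy) x
      simpa using this
    have hdim : Module.finrank k A = Module.finrank k (Module.Dual k A) :=
      (Subspace.dual_finrank_eq).symm
    have hbij : Function.Bijective B.flip :=
      ⟨hinj, (LinearMap.injective_iff_surjective_of_finrank_eq_finrank hdim).mp hinj⟩
    refine ⟨LinearEquiv.ofBijective B.flip hbij, ?_, ?_⟩
    · intro a x y
      simp only [LinearEquiv.ofBijective_apply, LinearMap.flip_apply]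
      exact (hassoc y a x).symm
    · intro g x hx h hh y hy
      simp only [LinearEquiv.ofBijective_apply, LinearMap.flip_apply]
      refine hgrade h (g * σ) ?_ y hy x hx
      intro heq
      apply hh
      rw [← mul_assoc] at heq
      exact eq_inv_of_mul_eq_one_left (mul_right_cancel (heq.trans (one_mul σ).symm))
end

section
/- Let A be a finite dimensional strongly G-graded algebra. Then A is graded Frobenius if and only if A_e is a Frobenius algebra. -/
namespace FrobAux

open scoped DirectSum

variable {k A : Type*} [Field k] [Ring A] [Algebra k A]
variable {G : Type*} [Group G] [DecidableEq G] {𝒜 : G → Submodule k A}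

/-- The grading decomposition as a linear equivalence. -/
noncomputable def decomp (hi : DirectSum.IsInternal 𝒜) : A ≃ₗ[k] (⨁ g, ↥(𝒜 g)) :=
  (LinearEquiv.ofBijective (DirectSum.coeLinearMap 𝒜) hi).symm

theorem decomp_same (hi : DirectSum.IsInternal 𝒜) {g : G} {x : A} (hx : x ∈ 𝒜 g) :
    decomp hi x g = ⟨x, hx⟩ :=
  hi.ofBijective_coeLinearMap_same ⟨x, hx⟩

theorem decomp_ne (hi : DirectSum.IsInternal 𝒜) {g h : G} (hgh : g ≠ h) {x : A}
    (hx : x ∈ 𝒜 g) : decomp hi x h = 0 :=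
  hi.ofBijective_coeLinearMap_of_ne hgh ⟨x, hx⟩

theorem decomp_symm_apply (hi : DirectSum.IsInternal 𝒜) (d : ⨁ g, ↥(𝒜 g)) :
    (decomp hi).symm d = DirectSum.coeLinearMap 𝒜 d := by
  rw [decomp, LinearEquiv.symm_symm]
  rfl

theorem eq_zero_of_decomp (hi : DirectSum.IsInternal 𝒜) {x : A}
    (h : ∀ g : G, (decomp hi x g : A) = 0) : x = 0 := by
  have h0 : decomp hi x = 0 := by
    refine DFinsupp.ext fun g => ?_
    rw [DFinsupp.zero_apply]
    exact Subtype.ext (by simpa using h g)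
  have := congrArg (decomp hi).symm h0
  simpa using this

theorem mem_of_decomp (hi : DirectSum.IsInternal 𝒜) {x : A} (g₀ : G)
    (h : ∀ g : G, g ≠ g₀ → decomp hi x g = 0) : x ∈ 𝒜 g₀ := by
  have hd : decomp hi x = DirectSum.of (fun g => ↥(𝒜 g)) g₀ (decomp hi x g₀) := by
    refine DFinsupp.ext fun g => ?_
    by_cases hg : g = g₀
    · subst hg; rw [DirectSum.of_eq_same]
    · rw [DirectSum.of_eq_of_ne _ _ _ hg, h g hg]
  have hx : x = ((decomp hi x g₀ : ↥(𝒜 g₀)) : A) := by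
    conv_lhs => rw [← (decomp hi).symm_apply_apply x, hd]
    rw [decomp_symm_apply]
    exact DirectSum.coeLinearMap_of 𝒜 g₀ _
  rw [hx]; exact (decomp hi x g₀).2

theorem mem_top_iSup (hi : DirectSum.IsInternal 𝒜) (x : A) : x ∈ ⨆ g, 𝒜 g := by
  rw [hi.submodule_iSup_eq_top]; trivial

/-- component 1 of `y * x` for `y ∈ 𝒜 c`. -/
theorem decomp_one_mul (hi : DirectSum.IsInternal 𝒜)
    (hmul : ∀ {g h : G}, ∀ a ∈ 𝒜 g, ∀ b ∈ 𝒜 h, a * b ∈ 𝒜 (g * h))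
    {c : G} {y : A} (hy : y ∈ 𝒜 c) (x : A) :
    (decomp hi (y * x) 1 : A) = y * (decomp hi x c⁻¹ : A) := by
  refine Submodule.iSup_induction (motive := fun x : A =>
      (decomp hi (y * x) 1 : A) = y * (decomp hi x c⁻¹ : A)) 𝒜 (mem_top_iSup hi x) ?_ ?_ ?_
  · intro h z hz
    by_cases hh : h = c⁻¹
    · subst hh
      have h1 : y * z ∈ 𝒜 1 := by
        have := hmul y hy z hz
        rwa [mul_inv_cancel] at this
      rw [decomp_same hi h1, decomp_same hi hz]
    · have hne : c * h ≠ 1 := fun hc => hh (by rw [← one_mul h, ← inv_mul_cancel c, mul_assoc, hc, mul_one])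
      rw [decomp_ne hi hne (hmul y hy z hz), decomp_ne hi hh hz]
      simp
  · simp
  · intro a b ha hb
    rw [mul_add, map_add, map_add, DirectSum.add_apply, DirectSum.add_apply,
      Submodule.coe_add, Submodule.coe_add, ha, hb, mul_add]

/-- evaluation of a graded `φ` at homogeneous `y` only sees one component of `x`. -/
theorem apply_decomp (hi : DirectSum.IsInternal 𝒜) {φ : A ≃ₗ[k] Module.Dual k A}
    (hgr : ∀ g : G, ∀ x ∈ 𝒜 g, φ x ∈ dualComponent 𝒜 g)
    {c : G} {y : A} (hy : y ∈ 𝒜 c) (x : A) :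
    φ x y = φ ((decomp hi x c⁻¹ : ↥(𝒜 c⁻¹)) : A) y := by
  refine Submodule.iSup_induction (motive := fun x : A =>
      φ x y = φ ((decomp hi x c⁻¹ : ↥(𝒜 c⁻¹)) : A) y) 𝒜 (mem_top_iSup hi x) ?_ ?_ ?_
  · intro h z hz
    by_cases hh : h = c⁻¹
    · subst hh; rw [decomp_same hi hz]
    · have h1 : φ z y = 0 := (hgr h z hz) c (fun hc => hh (by rw [← inv_inv h, hc])) y hy
      rw [h1, decomp_ne hi hh hz]
      simp
  · simp
  · intro a b ha hb
    rw [map_add, map_add, DirectSum.add_apply, Submodule.coe_add, map_add,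
      LinearMap.add_apply, ha, hb, LinearMap.add_apply]

theorem dual_eq_zero (hi : DirectSum.IsInternal 𝒜) {F : Module.Dual k A}
    (h : ∀ g : G, ∀ x ∈ 𝒜 g, F x = 0) : F = 0 := by
  ext x
  refine Submodule.iSup_induction (motive := fun x : A => F x = 0) 𝒜 (mem_top_iSup hi x) h
    (map_zero F) ?_
  intro a b ha hb
  rw [map_add, ha, hb, add_zero]

end FrobAux

section Main

open FrobAux

/-- a finite dimensional strongly `G`-graded algebra `A` is graded
Frobenius iff the identity component `A_e` is a Frobenius algebra, i.e. `A_e ≅ (A_e)*`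
as left `A_e`-modules (the left `A_e`-action on the dual being `(a • f) y = f (y * a)`). -/
theorem stronglyGraded_gradedFrobenius_iff
    {k A : Type*} [Field k] [Ring A] [Algebra k A] [FiniteDimensional k A]
    {G : Type*} [Group G] [DecidableEq G]
    (𝒜 : G → Submodule k A)
    (hinternal : DirectSum.IsInternal 𝒜)
    (hone : (1 : A) ∈ 𝒜 1)
    (hmul : ∀ {g h : G}, ∀ a ∈ 𝒜 g, ∀ b ∈ 𝒜 h, a * b ∈ 𝒜 (g * h))
    (hstrong : ∀ g h : G, 𝒜 g * 𝒜 h = 𝒜 (g * h)) :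
    IsSigmaGradedFrobenius 𝒜 (1 : G) ↔
      ∃ θ : ↥(𝒜 1) ≃ₗ[k] Module.Dual k ↥(𝒜 1),
        ∀ a x y : ↥(𝒜 1),
          θ ⟨(a : A) * (x : A), by simpa using hmul (a : A) a.2 (x : A) x.2⟩ y =
          θ x ⟨(y : A) * (a : A), by simpa using hmul (y : A) y.2 (a : A) a.2⟩ := by
  classical
  -- the projection onto the identity component
  let p : A →ₗ[k] ↥(𝒜 1) :=
    { toFun := fun x => decomp hinternal x 1
      map_add' := fun x y => by
        change decomp hinternal (x + y) 1 = decomp hinternal x 1 + decomp hinternal y 1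
        rw [map_add, DirectSum.add_apply]
      map_smul' := fun c x => by
        change decomp hinternal (c • x) 1 = c • decomp hinternal x 1
        rw [map_smul, DirectSum.smul_apply] }
  have hp_apply : ∀ x : A, p x = decomp hinternal x 1 := fun _ => rfl
  have hp_same : ∀ {x : A} (hx : x ∈ 𝒜 1), p x = ⟨x, hx⟩ := by
    intro x hx; rw [hp_apply, decomp_same hinternal hx]
  have hp_ne : ∀ {g : G}, g ≠ 1 → ∀ {x : A}, x ∈ 𝒜 g → p x = 0 := by
    intro g hg x hx; rw [hp_apply, decomp_ne hinternal hg hx]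
  constructor
  · rintro ⟨φ, hmodule, hgrade⟩
    have hgr : ∀ g : G, ∀ x ∈ 𝒜 g, φ x ∈ dualComponent 𝒜 g := by
      intro g x hx
      exact hgrade g x (by simpa using hx)
    -- the candidate map on the identity component
    let θ₀ : ↥(𝒜 1) →ₗ[k] Module.Dual k ↥(𝒜 1) :=
      ((𝒜 1).subtype.dualMap).comp ((φ : A →ₗ[k] Module.Dual k A).comp (𝒜 1).subtype)
    have hθ₀ : ∀ x y : ↥(𝒜 1), θ₀ x y = φ (x : A) (y : A) := fun _ _ => rfl
    have hinj : Function.Injective θ₀ := by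
      intro x y hxy
      rw [← sub_eq_zero, ← map_sub] at hxy
      have hz : φ ((x - y : ↥(𝒜 1)) : A) = 0 := by
        refine dual_eq_zero hinternal ?_
        intro g z hz
        by_cases hg : g = 1
        · subst hg
          have := congrFun (congrArg DFunLike.coe hxy) ⟨z, hz⟩
          simpa [hθ₀] using this
        · exact (hgr 1 _ (x - y).2) g (by simpa using hg) z hz
      have hsub : ((x - y : ↥(𝒜 1)) : A) = 0 := by
        apply φ.injective; rw [hz, map_zero]
      exact sub_eq_zero.mp (Subtype.ext hsub)
    have hsurj : Function.Surjective θ₀ := by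
      intro f
      set F : Module.Dual k A := (f : Module.Dual k ↥(𝒜 1)).comp p with hF
      have hFapp : ∀ z : A, F z = f (p z) := fun _ => rfl
      set x : A := φ.symm F with hx
      have hφx : φ x = F := φ.apply_symm_apply F
      have hx1 : x ∈ 𝒜 1 := by
        refine mem_of_decomp hinternal 1 ?_
        intro g hg
        have hcomp : φ ((decomp hinternal x g : ↥(𝒜 g)) : A) = 0 := by
          refine dual_eq_zero hinternal ?_
          intro c y hy
          by_cases hc : c = g⁻¹
          · subst hc
            have h1 := apply_decomp hinternal hgr hy x
            rw [inv_inv] at h1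
            rw [← h1, hφx, hFapp, hp_ne (by simpa using hg) hy, map_zero]
          · exact (hgr g _ (decomp hinternal x g).2) c hc y hy
        have : ((decomp hinternal x g : ↥(𝒜 g)) : A) = 0 := by
          apply φ.injective; rw [hcomp, map_zero]
        exact Subtype.ext (by simpa using this)
      refine ⟨⟨x, hx1⟩, ?_⟩
      ext y
      rw [hθ₀, hφx, hFapp, hp_same y.2]
    refine ⟨LinearEquiv.ofBijective θ₀ ⟨hinj, hsurj⟩, ?_⟩
    intro a x y
    show θ₀ _ y = θ₀ x _
    rw [hθ₀, hθ₀]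
    exact hmodule (a : A) (x : A) (y : A)
  · rintro ⟨θ, hθ⟩
    set one1 : ↥(𝒜 1) := ⟨1, hone⟩ with hone1
    set f : Module.Dual k ↥(𝒜 1) := θ one1 with hfdef
    have K : ∀ a y : ↥(𝒜 1),
        θ a y = f ⟨(y : A) * (a : A), by simpa using hmul (y : A) y.2 (a : A) a.2⟩ := by
      intro a y
      have h1 := hθ a one1 y
      have e1 : (⟨(a : A) * ((one1 : ↥(𝒜 1)) : A),
          by simpa using hmul (a : A) a.2 ((one1 : ↥(𝒜 1)) : A) one1.2⟩ : ↥(𝒜 1)) = a :=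
        Subtype.ext (mul_one _)
      rw [e1] at h1
      exact h1
    have hker : ∀ a : ↥(𝒜 1),
        (∀ y : ↥(𝒜 1),
          f ⟨(y : A) * (a : A), by simpa using hmul (y : A) y.2 (a : A) a.2⟩ = 0) →
        a = 0 := by
      intro a ha
      have : θ a = 0 := by
        ext y
        rw [K a y]
        exact ha y
      have h0 : θ a = θ 0 := by rw [this, map_zero]
      exact θ.injective h0
    -- the candidate graded Frobenius map
    let Φ : A →ₗ[k] Module.Dual k A :=
      ((LinearMap.mul k A).flip).compr₂ ((f : ↥(𝒜 1) →ₗ[k] k).comp p)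
    have hΦ : ∀ x y : A, Φ x y = f (p (y * x)) := fun _ _ => rfl
    have hinj : Function.Injective Φ := by
      rw [injective_iff_map_eq_zero]
      intro x hx0
      refine eq_zero_of_decomp hinternal ?_
      intro g
      set xg : A := ((decomp hinternal x g : ↥(𝒜 g)) : A) with hxg
      have hxgmem : xg ∈ 𝒜 g := (decomp hinternal x g).2
      -- f kills all of 𝒜 g⁻¹ * xg
      have hC : ∀ y ∈ 𝒜 g⁻¹, ∀ (hmem : y * xg ∈ 𝒜 1), f ⟨y * xg, hmem⟩ = 0 := by
        intro y hy hmem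
        have h1 : (decomp hinternal (y * x) 1 : A) = y * xg := by
          rw [decomp_one_mul hinternal hmul hy x, inv_inv]
        have h2 : p (y * x) = ⟨y * xg, hmem⟩ := by
          apply Subtype.ext
          rw [hp_apply]
          exact h1
        have h3 : Φ x y = 0 := by rw [hx0]; rfl
        rw [hΦ, h2] at h3
        exact h3
      -- hence 𝒜 g⁻¹ * xg = 0
      have hzero : ∀ y ∈ 𝒜 g⁻¹, y * xg = 0 := by
        intro y hy
        have hmem : y * xg ∈ 𝒜 1 := by simpa using hmul y hy xg hxgmem
        refine congrArg Subtype.val (hker ⟨y * xg, hmem⟩ ?_)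
        intro w
        have hwy : (w : A) * y ∈ 𝒜 g⁻¹ := by simpa using hmul (w : A) w.2 y hy
        have hmem2 : ((w : A) * y) * xg ∈ 𝒜 1 := by simpa using hmul _ hwy xg hxgmem
        have e2 : (⟨(w : A) * (y * xg), by simpa using hmul (w : A) w.2 (y * xg) hmem⟩ :
            ↥(𝒜 1)) = ⟨((w : A) * y) * xg, hmem2⟩ := Subtype.ext (mul_assoc _ _ _).symm
        calc f ⟨(w : A) * (y * xg), _⟩ = f ⟨((w : A) * y) * xg, hmem2⟩ := by rw [e2]
          _ = 0 := hC _ hwy hmem2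
      -- strong grading kills xg
      have hspan : 𝒜 g⁻¹ * Submodule.span k {xg} = ⊥ := by
        rw [eq_bot_iff]
        refine Submodule.mul_le.2 ?_
        intro m hm n hn
        obtain ⟨c, rfl⟩ := Submodule.mem_span_singleton.1 hn
        rw [mul_smul_comm, hzero m hm, smul_zero]
        exact Submodule.zero_mem ⊥
      have hle : Submodule.span k {xg} ≤ ⊥ := by
        have h1 : Submodule.span k {xg} ≤ 𝒜 1 * Submodule.span k {xg} := by
          rw [Submodule.span_le]
          intro z hz
          rw [Set.mem_singleton_iff] at hz
          subst hz
          have := Submodule.mul_mem_mul hone (Submodule.mem_span_singleton_self xg)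
          rwa [one_mul] at this
        calc Submodule.span k {xg} ≤ 𝒜 1 * Submodule.span k {xg} := h1
          _ = (𝒜 g * 𝒜 g⁻¹) * Submodule.span k {xg} := by rw [hstrong, mul_inv_cancel]
          _ = 𝒜 g * (𝒜 g⁻¹ * Submodule.span k {xg}) := mul_assoc _ _ _
          _ = ⊥ := by rw [hspan, Submodule.mul_bot]
      have : xg ∈ (⊥ : Submodule k A) := hle (Submodule.mem_span_singleton_self xg)
      simpa using this
    have hsurj : Function.Surjective Φ := by
      rw [← LinearMap.injective_iff_surjective_of_finrank_eq_finrank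
        Subspace.dual_finrank_eq.symm]
      exact hinj
    refine ⟨LinearEquiv.ofBijective Φ ⟨hinj, hsurj⟩, ?_, ?_⟩
    · intro a x y
      show Φ (a * x) y = Φ x (y * a)
      rw [hΦ, hΦ, mul_assoc]
    · intro g x hx
      rw [mul_one] at hx
      intro h hh y hy
      show Φ x y = 0
      rw [hΦ]
      have hmem : y * x ∈ 𝒜 (h * g) := hmul y hy x hx
      have hne : h * g ≠ 1 := by
        intro hc
        exact hh (by rw [← one_mul g⁻¹, ← hc, mul_assoc, mul_inv_cancel, mul_one])
      rw [hp_ne hne hmem, map_zero]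

end Main
end

section
/- Let A be a finite dimensional G-graded algebra and σ ∈ G. Then A is σ-graded Frobenius if and only if A_σ ≅ (A_e)* as left A_e-modules and A is left σ-faithful, i.e. for every g ∈ G and nonzero a_g ∈ A_g one has A_{σ g⁻¹} a_g ≠ 0. -/
section SGFHelpers

open DirectSum

variable {k A : Type*} [Field k] [Ring A] [Algebra k A]
variable {G : Type*} [Group G] [DecidableEq G]
variable (𝒜 : G → Submodule k A) [DirectSum.Decomposition 𝒜]

/-- A linear functional vanishing on every homogeneous component is zero. -/
lemma sgf_dual_eq_zero (f : Module.Dual k A)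
    (hf : ∀ g : G, ∀ x ∈ 𝒜 g, f x = 0) : f = 0 := by
  classical
  ext a
  rw [LinearMap.zero_apply, ← DirectSum.sum_support_decompose 𝒜 a, map_sum]
  exact Finset.sum_eq_zero fun g _ => hf g _ (DirectSum.decompose 𝒜 a g).2

lemma sgf_mem_of_components (x : A) (g₀ : G)
    (hx : ∀ g : G, g ≠ g₀ → (DirectSum.decompose 𝒜 x g : A) = 0) : x ∈ 𝒜 g₀ := by
  classical
  rw [← DirectSum.sum_support_decompose 𝒜 x]
  refine Submodule.sum_mem _ fun g _ => ?_
  by_cases h : g = g₀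
  · subst h; exact (DirectSum.decompose 𝒜 x g).2
  · rw [hx g h]; exact zero_mem _

lemma sgf_eq_zero_of_components (x : A)
    (hx : ∀ g : G, (DirectSum.decompose 𝒜 x g : A) = 0) : x = 0 := by
  classical
  rw [← DirectSum.sum_support_decompose 𝒜 x]
  exact Finset.sum_eq_zero fun g _ => hx g

lemma sgf_decompose_mul (hmul : ∀ {g h : G}, ∀ a ∈ 𝒜 g, ∀ b ∈ 𝒜 h, a * b ∈ 𝒜 (g * h))
    (σ m : G) (y : A) (hy : y ∈ 𝒜 m) (x : A) :
    (DirectSum.decompose 𝒜 (y * x) σ : A)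
      = y * (DirectSum.decompose 𝒜 x (m⁻¹ * σ) : A) := by
  classical
  have e0 : DirectSum.decompose 𝒜 (y * x)
      = ∑ g ∈ (DirectSum.decompose 𝒜 x).support,
          DirectSum.decompose 𝒜 (y * (DirectSum.decompose 𝒜 x g : A)) := by
    conv_lhs => rw [← DirectSum.sum_support_decompose 𝒜 x, Finset.mul_sum,
      DirectSum.decompose_sum]
  have e1 : (DirectSum.decompose 𝒜 (y * x) σ : A)
      = ∑ g ∈ (DirectSum.decompose 𝒜 x).support,
          (DirectSum.decompose 𝒜 (y * (DirectSum.decompose 𝒜 x g : A)) σ : A) := by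
    rw [e0, DFinsupp.finset_sum_apply, AddSubmonoidClass.coe_finset_sum]
  rw [e1]
  have e2 : ∀ g ∈ (DirectSum.decompose 𝒜 x).support,
      (DirectSum.decompose 𝒜 (y * (DirectSum.decompose 𝒜 x g : A)) σ : A)
        = if g = m⁻¹ * σ then y * (DirectSum.decompose 𝒜 x g : A) else 0 := by
    intro g _
    have hmem : y * (DirectSum.decompose 𝒜 x g : A) ∈ 𝒜 (m * g) :=
      hmul y hy _ (DirectSum.decompose 𝒜 x g).2
    split_ifs with h
    · subst h
      rw [show m * (m⁻¹ * σ) = σ by group] at hmem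
      exact DirectSum.decompose_of_mem_same 𝒜 hmem
    · refine DirectSum.decompose_of_mem_ne 𝒜 hmem fun hc => h ?_
      rw [← hc]; group
  rw [Finset.sum_congr rfl e2, Finset.sum_ite_eq' (DirectSum.decompose 𝒜 x).support]
  by_cases hg : m⁻¹ * σ ∈ (DirectSum.decompose 𝒜 x).support
  · rw [if_pos hg]
  · rw [if_neg hg, DFinsupp.notMem_support_iff.mp hg]
    simp

end SGFHelpers

set_option maxHeartbeats 1000000 in
/-- a finite dimensional `G`-graded algebra `A` is `σ`-graded Frobenius iff
`A_σ ≅ (A_e)*` as left `A_e`-modules (the action on `A_σ` being `a • x = a * x ∈ A_σ`,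
and on `(A_e)*` being `(a • f) b = f (b * a)`) and `A` is left `σ`-faithful, i.e. for
every `g ∈ G` and nonzero `a_g ∈ A_g` there is `b ∈ A_{σg⁻¹}` with `b * a_g ≠ 0`. -/
theorem sigmaGradedFrobenius_iff_component_and_faithful
    {k A : Type*} [Field k] [Ring A] [Algebra k A] [FiniteDimensional k A]
    {G : Type*} [Group G] [DecidableEq G]
    (𝒜 : G → Submodule k A)
    (hinternal : DirectSum.IsInternal 𝒜)
    (hone : (1 : A) ∈ 𝒜 1)
    (hmul : ∀ {g h : G}, ∀ a ∈ 𝒜 g, ∀ b ∈ 𝒜 h, a * b ∈ 𝒜 (g * h))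
    (σ : G) :
    IsSigmaGradedFrobenius 𝒜 σ ↔
      ((∃ θ : ↥(𝒜 σ) ≃ₗ[k] Module.Dual k ↥(𝒜 1),
        ∀ (a : ↥(𝒜 1)) (x : ↥(𝒜 σ)) (b : ↥(𝒜 1)),
          θ ⟨(a : A) * (x : A), by simpa using hmul (a : A) a.2 (x : A) x.2⟩ b =
          θ x ⟨(b : A) * (a : A), by simpa using hmul (b : A) b.2 (a : A) a.2⟩) ∧
      (∀ g : G, ∀ a ∈ 𝒜 g, a ≠ 0 → ∃ b ∈ 𝒜 (σ * g⁻¹), b * a ≠ 0)) := by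

  classical
  letI : DirectSum.Decomposition 𝒜 := hinternal.chooseDecomposition
  constructor
  · rintro ⟨φ, hmod, hgr⟩
    constructor
    · -- construct θ from φ
      set ψ : ↥(𝒜 σ) →ₗ[k] Module.Dual k ↥(𝒜 1) :=
        ((𝒜 1).subtype.dualMap).comp
          ((φ : A →ₗ[k] Module.Dual k A).comp (𝒜 σ).subtype) with hψdef
      have hψ : ∀ (x : ↥(𝒜 σ)) (b : ↥(𝒜 1)), ψ x b = φ (x : A) (b : A) :=
        fun _ _ => rfl
      have hgr1 : ∀ x : A, x ∈ 𝒜 σ → φ x ∈ dualComponent 𝒜 1 := by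
        intro x hx
        exact hgr 1 x (by rwa [one_mul])
      have hψ0 : ∀ x : ↥(𝒜 σ), ψ x = 0 → x = 0 := by
        intro x hx
        have hφx : φ (x : A) = 0 := by
          refine sgf_dual_eq_zero 𝒜 _ fun g z hz => ?_
          by_cases hg : g = 1
          · subst hg
            have := DFunLike.congr_fun hx ⟨z, hz⟩
            simpa [hψ] using this
          · exact hgr1 x x.2 g (by simpa using hg) z hz
        exact Subtype.ext (φ.injective (by simp [hφx]))
      have hψinj : Function.Injective ψ := by
        intro x y hxy
        have h0 : x - y = 0 := hψ0 _ (by rw [map_sub, hxy, sub_self])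
        exact sub_eq_zero.mp h0
      have hψsurj : Function.Surjective ψ := by
        intro f
        set F : Module.Dual k A :=
          { toFun := fun a => f (DirectSum.decompose 𝒜 a 1)
            map_add' := by
              intro a b
              simp [DirectSum.decompose_add, DirectSum.add_apply]
            map_smul' := by
              intro c a
              simp [DirectSum.decompose_smul, DirectSum.smul_apply] } with hFdef
        have hF : ∀ a : A, F a = f (DirectSum.decompose 𝒜 a 1) := fun _ => rfl
        set x : A := φ.symm F with hxdef
        have hφx : φ x = F := φ.apply_symm_apply F
        have hcomp : ∀ h : G, h ≠ σ → (DirectSum.decompose 𝒜 x h : A) = 0 := by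
          intro h hh
          have hx_h : (DirectSum.decompose 𝒜 x h : A) ∈ 𝒜 (h * σ⁻¹ * σ) := by
            simpa using (DirectSum.decompose 𝒜 x h).2
          have h1 := hgr (h * σ⁻¹) _ hx_h
          have h2 : ∀ y ∈ 𝒜 (σ * h⁻¹), φ (DirectSum.decompose 𝒜 x h : A) y = 0 := by
            intro y hy
            have hFy : F y = 0 := by
              have hz : (DirectSum.decompose 𝒜 y 1 : A) = 0 :=
                DirectSum.decompose_of_mem_ne 𝒜 hy
                  (fun hc => hh (mul_inv_eq_one.mp hc).symm)
              rw [hF, ZeroMemClass.coe_eq_zero.mp hz, map_zero]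
            have hsum : F y = ∑ g ∈ (DirectSum.decompose 𝒜 x).support,
                φ (DirectSum.decompose 𝒜 x g : A) y := by
              conv_lhs => rw [← hφx]
              conv_lhs => rw [← DirectSum.sum_support_decompose 𝒜 x]
              rw [map_sum, LinearMap.sum_apply]
            have hterm : ∀ g ∈ (DirectSum.decompose 𝒜 x).support,
                φ (DirectSum.decompose 𝒜 x g : A) y
                  = if g = h then φ (DirectSum.decompose 𝒜 x h : A) y else 0 := by
              intro g _
              split_ifs with hgh
              · rw [hgh]
              · have hx_g : (DirectSum.decompose 𝒜 x g : A) ∈ 𝒜 (g * σ⁻¹ * σ) := by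
                  simpa using (DirectSum.decompose 𝒜 x g).2
                refine hgr (g * σ⁻¹) _ hx_g (σ * h⁻¹) ?_ y hy
                rw [mul_inv_rev, inv_inv]
                intro hc
                exact hgh (inv_injective (mul_left_cancel hc)).symm
            rw [Finset.sum_congr rfl hterm,
              Finset.sum_ite_eq' (DirectSum.decompose 𝒜 x).support] at hsum
            rw [hFy] at hsum
            by_cases hmem : h ∈ (DirectSum.decompose 𝒜 x).support
            · rw [if_pos hmem] at hsum; exact hsum.symm
            · have h0 : DirectSum.decompose 𝒜 x h = 0 :=
                DFinsupp.notMem_support_iff.mp hmem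
              rw [h0]
              simp
          have hφxh : φ (DirectSum.decompose 𝒜 x h : A) = 0 := by
            refine sgf_dual_eq_zero 𝒜 _ fun m z hz => ?_
            by_cases hm : m = σ * h⁻¹
            · subst hm; exact h2 z hz
            · refine h1 m ?_ z hz
              rw [mul_inv_rev, inv_inv]; exact hm
          exact φ.injective (by rw [hφxh, map_zero])
        have hxσ : x ∈ 𝒜 σ := sgf_mem_of_components 𝒜 x σ hcomp
        refine ⟨⟨x, hxσ⟩, ?_⟩
        ext b
        rw [hψ]
        show φ x (b : A) = f b
        rw [hφx, hF,
          show DirectSum.decompose 𝒜 (b : A) 1 = b from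
            Subtype.ext (DirectSum.decompose_of_mem_same 𝒜 b.2)]
      exact ⟨LinearEquiv.ofBijective ψ ⟨hψinj, hψsurj⟩, fun a x b => hmod a x b⟩
    · -- faithfulness
      intro g a ha ha0
      have h1 : φ a ∈ dualComponent 𝒜 (g * σ⁻¹) := hgr _ a (by simpa using ha)
      by_contra hcon
      push_neg at hcon
      have hφa : φ a = 0 := by
        refine sgf_dual_eq_zero 𝒜 _ fun m y hy => ?_
        by_cases hm : m = σ * g⁻¹
        · subst hm
          have e := hmod a 1 y
          rw [mul_one] at e
          rw [e, hcon y hy, map_zero]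
        · refine h1 m ?_ y hy
          rw [mul_inv_rev, inv_inv]; exact hm
      exact ha0 (φ.injective (by rw [hφa, map_zero]))
  · rintro ⟨⟨θ, hθ⟩, hfaith⟩
    set lam : A →ₗ[k] k :=
      { toFun := fun z => θ (DirectSum.decompose 𝒜 z σ) ⟨1, hone⟩
        map_add' := by
          intro a b
          simp [DirectSum.decompose_add, DirectSum.add_apply]
        map_smul' := by
          intro c a
          simp [DirectSum.decompose_smul, DirectSum.smul_apply] } with hlamdef
    have hlam : ∀ z : A, lam z = θ (DirectSum.decompose 𝒜 z σ) ⟨1, hone⟩ :=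
      fun _ => rfl
    set Φ : A →ₗ[k] Module.Dual k A :=
      { toFun := fun x => lam ∘ₗ LinearMap.mulRight k x
        map_add' := by intro x y; ext z; simp [mul_add]
        map_smul' := by intro c x; ext z; simp [mul_smul_comm] } with hΦdef
    have hΦ : ∀ x y : A, Φ x y = lam (y * x) := fun _ _ => rfl
    have hinj : Function.Injective Φ := by
      suffices h : ∀ x : A, Φ x = 0 → x = 0 by
        intro x y hxy
        have h0 : x - y = 0 := h _ (by rw [map_sub, hxy, sub_self])
        exact sub_eq_zero.mp h0
      intro x hx0
      have hall : ∀ y : A, lam (y * x) = 0 := fun y => DFunLike.congr_fun hx0 y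
      refine sgf_eq_zero_of_components 𝒜 x fun g => ?_
      by_contra hne
      obtain ⟨b, hb, hba⟩ := hfaith g _ (DirectSum.decompose 𝒜 x g).2 hne
      set z : A := (DirectSum.decompose 𝒜 x g : A) with hzdef
      have hbx : b * z ∈ 𝒜 σ := by
        simpa using hmul b hb _ (DirectSum.decompose 𝒜 x g).2
      have hθ0 : θ ⟨b * z, hbx⟩ = 0 := by
        ext c
        have hcb : (c : A) * b ∈ 𝒜 (σ * g⁻¹) := by
          simpa using hmul (c : A) c.2 b hb
        have hd : (DirectSum.decompose 𝒜 (((c : A) * b) * x) σ : A)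
            = ((c : A) * b) * (DirectSum.decompose 𝒜 x ((σ * g⁻¹)⁻¹ * σ) : A) :=
          sgf_decompose_mul 𝒜 hmul σ _ _ hcb x
        rw [show (σ * g⁻¹)⁻¹ * σ = g by group] at hd
        rw [LinearMap.zero_apply]
        calc θ ⟨b * z, hbx⟩ c
            = θ ⟨b * z, hbx⟩ ⟨(1 : A) * (c : A), by
                simpa using hmul (1 : A) hone (c : A) c.2⟩ := by
              exact congrArg (θ ⟨b * z, hbx⟩) (Subtype.ext (one_mul _).symm)
          _ = θ ⟨(c : A) * (b * z), by
                have := hmul (c : A) c.2 (b * z) hbx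
                simpa using this⟩ ⟨1, hone⟩ :=
              (hθ c ⟨b * z, hbx⟩ ⟨1, hone⟩).symm
          _ = θ (DirectSum.decompose 𝒜 (((c : A) * b) * x) σ) ⟨1, hone⟩ := by
              refine congrArg (fun t : ↥(𝒜 σ) => θ t ⟨1, hone⟩) (Subtype.ext ?_)
              rw [hd]
              exact (mul_assoc _ _ _).symm
          _ = 0 := hall ((c : A) * b)
      have hz0 : (⟨b * z, hbx⟩ : ↥(𝒜 σ)) = 0 := θ.injective (by rw [hθ0, map_zero])
      exact hba (Subtype.ext_iff.mp hz0)
    have hsurj : Function.Surjective Φ :=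
      (LinearMap.injective_iff_surjective_of_finrank_eq_finrank
        (by rw [Subspace.dual_finrank_eq])).mp hinj
    refine ⟨LinearEquiv.ofBijective Φ ⟨hinj, hsurj⟩, ?_, ?_⟩
    · intro a x y
      show Φ (a * x) y = Φ x (y * a)
      rw [hΦ, hΦ, mul_assoc]
    · intro g x hx h hh y hy
      show Φ x y = 0
      rw [hΦ, hlam]
      have hyx : y * x ∈ 𝒜 (h * (g * σ)) := hmul y hy x hx
      have hz : (DirectSum.decompose 𝒜 (y * x) σ : A) = 0 := by
        refine DirectSum.decompose_of_mem_ne 𝒜 hyx fun hc => hh ?_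
        apply eq_inv_of_mul_eq_one_left
        have := congrArg (· * σ⁻¹) hc
        simpa [mul_assoc] using this
      rw [ZeroMemClass.coe_eq_zero.mp hz, map_zero]
      rfl
end

section
/- A finite dimensional G-graded algebra A is graded Frobenius if and only if A_e is a Frobenius algebra and A is left e-faithful (i.e., for every g ∈ G and nonzero a_g ∈ A_g, A_{g⁻¹} a_g ≠ 0). -/
section Aux

set_option linter.unusedSectionVars false

variable {k A : Type*} [Field k] [Ring A] [Algebra k A]
    {G : Type*} [Group G] [DecidableEq G]
    (𝒜 : G → Submodule k A) [DirectSum.Decomposition 𝒜]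

/-- A functional vanishing on every component is zero. -/
lemma dual_eq_zero_of_vanishes (f : Module.Dual k A)
    (h : ∀ g : G, ∀ x ∈ 𝒜 g, f x = 0) : f = 0 := by
  ext x
  refine DirectSum.Decomposition.inductionOn 𝒜 (motive := fun x => f x = 0) (by simp)
    (fun {g} m => h g m m.2) (fun a b ha hb => by simp [map_add, ha, hb]) x

lemma key_decompose
    (hmul : ∀ {g h : G}, ∀ a ∈ 𝒜 g, ∀ b ∈ 𝒜 h, a * b ∈ 𝒜 (g * h))
    (g : G) (y : A) (hy : y ∈ 𝒜 g⁻¹) (x : A) :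
    (DirectSum.decompose 𝒜 (y * x) 1 : A) = y * (DirectSum.decompose 𝒜 x g : A) := by
  refine DirectSum.Decomposition.inductionOn 𝒜
    (motive := fun x => (DirectSum.decompose 𝒜 (y * x) 1 : A)
      = y * (DirectSum.decompose 𝒜 x g : A)) (by simp) ?_ ?_ x
  · intro h m
    by_cases hgh : h = g
    · subst hgh
      rw [DirectSum.decompose_of_mem_same 𝒜 m.2,
        DirectSum.decompose_of_mem_same 𝒜 (show y * (m : A) ∈ 𝒜 1 by
          simpa using hmul y hy (m : A) m.2)]
    · rw [DirectSum.decompose_of_mem_ne 𝒜 m.2 hgh,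
        DirectSum.decompose_of_mem_ne 𝒜 (hmul y hy (m : A) m.2)
          (by simpa [inv_mul_eq_one] using fun e => hgh e.symm), mul_zero]
  · intro a b ha hb
    simp only [mul_add, DirectSum.decompose_add, DirectSum.add_apply,
      Submodule.coe_add, ha, hb]

lemma eq_zero_of_components
    (x : A) (h : ∀ g : G, (DirectSum.decompose 𝒜 x g : A) = 0) : x = 0 := by
  have h2 : DirectSum.decompose 𝒜 x = 0 :=
    DFunLike.ext _ _ fun g => ZeroMemClass.coe_eq_zero.mp (h g)
  have := congrArg (DirectSum.decompose 𝒜).symm h2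
  simpa using this

/-- Restriction of a graded-dual-valued map to the identity component. -/
def resL (φ : A →ₗ[k] Module.Dual k A) :
    ↥(𝒜 1) →ₗ[k] Module.Dual k ↥(𝒜 1) where
  toFun x := (φ (x : A)).comp (𝒜 1).subtype
  map_add' a b := by ext y; simp
  map_smul' c a := by ext y; simp

@[simp] lemma resL_apply (φ : A →ₗ[k] Module.Dual k A) (x y : ↥(𝒜 1)) :
    resL 𝒜 φ x y = φ (x : A) (y : A) := rfl

/-- The candidate Frobenius morphism built from a functional on the identity component. -/
def gradedPhi (lam : Module.Dual k ↥(𝒜 1)) : A →ₗ[k] Module.Dual k A where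
  toFun x :=
    { toFun := fun y => lam (DirectSum.decompose 𝒜 (y * x) 1)
      map_add' := fun y z => by
        simp [add_mul, DirectSum.decompose_add, DirectSum.add_apply]
      map_smul' := fun c y => by
        simp [smul_mul_assoc, DirectSum.decompose_smul, DirectSum.smul_apply] }
  map_add' a b := by
    ext y
    simp [mul_add, DirectSum.decompose_add, DirectSum.add_apply]
  map_smul' c a := by
    ext y
    simp [mul_smul_comm, DirectSum.decompose_smul, DirectSum.smul_apply]

@[simp] lemma gradedPhi_apply (lam : Module.Dual k ↥(𝒜 1)) (x y : A) :
    gradedPhi 𝒜 lam x y = lam (DirectSum.decompose 𝒜 (y * x) 1) := rfl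

end Aux

/-- a finite dimensional `G`-graded algebra `A` is graded Frobenius iff
`A_e` is a Frobenius algebra (`A_e ≅ (A_e)*` as left `A_e`-modules) and `A` is left
`e`-faithful: for every `g ∈ G` and nonzero `a_g ∈ A_g` one has `A_{g⁻¹} a_g ≠ 0`. -/

theorem gradedFrobenius_iff_identityComponent_and_faithful
    {k A : Type*} [Field k] [Ring A] [Algebra k A] [FiniteDimensional k A]
    {G : Type*} [Group G] [DecidableEq G]
    (𝒜 : G → Submodule k A)
    (hinternal : DirectSum.IsInternal 𝒜)
    (hone : (1 : A) ∈ 𝒜 1)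
    (hmul : ∀ {g h : G}, ∀ a ∈ 𝒜 g, ∀ b ∈ 𝒜 h, a * b ∈ 𝒜 (g * h)) :
    IsSigmaGradedFrobenius 𝒜 (1 : G) ↔
      ((∃ θ : ↥(𝒜 1) ≃ₗ[k] Module.Dual k ↥(𝒜 1),
        ∀ a x y : ↥(𝒜 1),
          θ ⟨(a : A) * (x : A), by simpa using hmul (a : A) a.2 (x : A) x.2⟩ y =
          θ x ⟨(y : A) * (a : A), by simpa using hmul (y : A) y.2 (a : A) a.2⟩) ∧
      (∀ g : G, ∀ a ∈ 𝒜 g, a ≠ 0 → ∃ b ∈ 𝒜 g⁻¹, b * a ≠ 0)) := by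
  letI : DirectSum.Decomposition 𝒜 := hinternal.chooseDecomposition
  constructor
  · rintro ⟨φ, hrel, hgr⟩
    have hgr' : ∀ g : G, ∀ x ∈ 𝒜 g, φ x ∈ dualComponent 𝒜 g := by
      intro g x hx
      exact hgr g x (by rwa [mul_one])
    constructor
    · -- construct θ
      have hinj : Function.Injective (resL 𝒜 (φ : A →ₗ[k] Module.Dual k A)) := by
        rw [injective_iff_map_eq_zero]
        intro a ha
        have hz : φ (a : A) = 0 := by
          apply dual_eq_zero_of_vanishes 𝒜
          intro g x hx
          by_cases hg : g = 1
          · subst hg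
            simpa using DFunLike.congr_fun ha ⟨x, hx⟩
          · exact hgr' 1 _ (by simpa using a.2) g (by simpa using hg) x hx
        have : (a : A) = 0 := φ.injective (by simpa using hz)
        exact Subtype.ext this
      have hsurj : Function.Surjective (resL 𝒜 (φ : A →ₗ[k] Module.Dual k A)) :=
        (LinearMap.injective_iff_surjective_of_finrank_eq_finrank
          (Subspace.dual_finrank_eq).symm).mp hinj
      refine ⟨LinearEquiv.ofBijective _ ⟨hinj, hsurj⟩, ?_⟩
      intro a x y
      exact hrel (a : A) (x : A) (y : A)
    · -- faithfulness
      intro g a ha hne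
      have hφa : φ a ≠ 0 := fun h => hne (φ.injective (by simpa using h))
      have : ∃ y ∈ 𝒜 g⁻¹, φ a y ≠ 0 := by
        by_contra hc
        push_neg at hc
        refine hφa (dual_eq_zero_of_vanishes 𝒜 _ ?_)
        intro h y hy
        by_cases hh : h = g⁻¹
        · exact hc y (hh ▸ hy)
        · exact hgr' g a ha h hh y hy
      obtain ⟨y, hy, hyne⟩ := this
      refine ⟨y, hy, fun h0 => hyne ?_⟩
      have := hrel a 1 y
      rw [mul_one] at this
      rw [this, h0, map_zero]
  · rintro ⟨⟨θ, hbal⟩, hfaith⟩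
    set e1 : ↥(𝒜 1) := ⟨1, hone⟩ with he1
    -- nondegeneracy of (w, z) ↦ θ 1 (w * z)
    have hnd : ∀ z : ↥(𝒜 1), z ≠ 0 → ∃ w : ↥(𝒜 1),
        θ e1 ⟨(w : A) * (z : A), by simpa using hmul (w : A) w.2 (z : A) z.2⟩ ≠ 0 := by
      intro z hz
      have hθz : θ z ≠ 0 := fun h => hz (by simpa using θ.injective (by simpa using h))
      have : ∃ w : ↥(𝒜 1), θ z w ≠ 0 := by
        by_contra hc
        push_neg at hc
        exact hθz (LinearMap.ext hc)
      obtain ⟨w, hw⟩ := this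
      refine ⟨w, fun h0 => hw ?_⟩
      have hb := hbal z e1 w
      have hze : (⟨(z : A) * (e1 : A), by simpa using hmul (z : A) z.2 (e1 : A) e1.2⟩
          : ↥(𝒜 1)) = z := Subtype.ext (by simp [he1])
      rw [hze] at hb
      rw [hb, h0]
    set Φ := gradedPhi 𝒜 (θ e1) with hΦ
    have hΦinj : Function.Injective Φ := by
      rw [injective_iff_map_eq_zero]
      intro x hx
      apply eq_zero_of_components 𝒜
      intro g
      by_contra hg
      obtain ⟨b, hb, hbne⟩ := hfaith g _ (DirectSum.decompose 𝒜 x g).2 hg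
      have hmem : b * (DirectSum.decompose 𝒜 x g : A) ∈ 𝒜 1 := by
        simpa using hmul b hb _ (DirectSum.decompose 𝒜 x g).2
      obtain ⟨w, hw⟩ := hnd ⟨_, hmem⟩ (by simpa using hbne)
      have hwb : (w : A) * b ∈ 𝒜 g⁻¹ := by simpa using hmul (w : A) w.2 b hb
      have hzero : Φ x ((w : A) * b) = 0 := by rw [hx]; rfl
      rw [hΦ, gradedPhi_apply] at hzero
      have hkey := key_decompose 𝒜 hmul g ((w : A) * b) hwb x
      apply hw
      have heq : (DirectSum.decompose 𝒜 ((w : A) * b * x) 1 : ↥(𝒜 1)) =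
          ⟨(w : A) * (b * (DirectSum.decompose 𝒜 x g : A)), by
            simpa using hmul (w : A) w.2 _ hmem⟩ := by
        apply Subtype.ext
        rw [hkey, mul_assoc]
      rw [heq] at hzero
      exact hzero
    have hΦsurj : Function.Surjective Φ :=
      (LinearMap.injective_iff_surjective_of_finrank_eq_finrank
        (Subspace.dual_finrank_eq).symm).mp hΦinj
    refine ⟨LinearEquiv.ofBijective Φ ⟨hΦinj, hΦsurj⟩, ?_, ?_⟩
    · intro a x y
      show Φ (a * x) y = Φ x (y * a)
      rw [hΦ, gradedPhi_apply, gradedPhi_apply, mul_assoc]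
    · intro g x hx h hh y hy
      rw [mul_one] at hx
      show Φ x y = 0
      rw [hΦ, gradedPhi_apply]
      have hyx : y * x ∈ 𝒜 (h * g) := hmul y hy x hx
      have hne : h * g ≠ 1 := fun h1 => hh (eq_inv_of_mul_eq_one_left h1)
      have hz : (DirectSum.decompose 𝒜 (y * x) 1 : A) = 0 :=
        DirectSum.decompose_of_mem_ne 𝒜 hyx hne
      rw [ZeroMemClass.coe_eq_zero.mp hz, map_zero]
end

section
/- Every finite dimensional graded semisimple G-graded algebra is graded Frobenius. In particular, every finite dimensional G-graded division algebra is graded Frobenius. -/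
set_option linter.unusedSectionVars false
set_option maxHeartbeats 1000000



section Aux

variable {k A : Type*} [Field k] [Ring A] [Algebra k A]
variable {G : Type*} [Group G] [DecidableEq G]
variable (𝒜 : G → Submodule k A)

/-- The projection onto the degree-`g` component. -/
noncomputable def gproj (hint : DirectSum.IsInternal 𝒜) (g : G) : A →ₗ[k] A :=
  (𝒜 g).subtype ∘ₗ (DirectSum.component k G (fun g => ↥(𝒜 g)) g) ∘ₗ
    (LinearEquiv.ofBijective (DirectSum.coeLinearMap 𝒜) hint).symm.toLinearMap

variable (hint : DirectSum.IsInternal 𝒜)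

theorem gproj_mem (g : G) (x : A) : gproj 𝒜 hint g x ∈ 𝒜 g := SetLike.coe_mem _

theorem gproj_of_mem {g : G} {x : A} (hx : x ∈ 𝒜 g) : gproj 𝒜 hint g x = x := by
  have h := hint.ofBijective_coeLinearMap_of_mem (i := g) hx
  show ↑(((LinearEquiv.ofBijective (DirectSum.coeLinearMap 𝒜) hint).symm x) g) = x
  rw [h]

theorem gproj_of_mem_ne {g h : G} {x : A} (hx : x ∈ 𝒜 h) (hne : h ≠ g) :
    gproj 𝒜 hint g x = 0 := by
  have h2 := hint.ofBijective_coeLinearMap_of_mem_ne hne hx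
  show ↑(((LinearEquiv.ofBijective (DirectSum.coeLinearMap 𝒜) hint).symm x) g) = (0:A)
  rw [h2]; rfl

theorem eq_zero_of_gproj_eq_zero {x : A} (h : ∀ g, gproj 𝒜 hint g x = 0) : x = 0 := by
  set e := LinearEquiv.ofBijective (DirectSum.coeLinearMap 𝒜) hint with he
  have hx : e.symm x = 0 := DFinsupp.ext fun g => Subtype.ext (h g)
  have h2 := congrArg e hx
  rwa [e.apply_symm_apply, map_zero] at h2

include hint in
theorem ext_zero {M : Type*} [AddCommGroup M] [Module k M] (L : A →ₗ[k] M)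
    (h : ∀ g, ∀ z ∈ 𝒜 g, L z = 0) : ∀ x : A, L x = 0 := by
  intro x
  have hx : x ∈ ⨆ g, 𝒜 g := by rw [hint.submodule_iSup_eq_top]; trivial
  refine Submodule.iSup_induction 𝒜 (motive := fun z => L z = 0) hx h (map_zero L) ?_
  intro a b ha hb
  show L (a + b) = 0
  rw [map_add, ha, hb, add_zero]

include hint in
theorem ext_eq {M : Type*} [AddCommGroup M] [Module k M] (L₁ L₂ : A →ₗ[k] M)
    (h : ∀ g, ∀ z ∈ 𝒜 g, L₁ z = L₂ z) (x : A) : L₁ x = L₂ x := by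
  have h2 := ext_zero 𝒜 hint (L₁ - L₂) (fun g z hz => by
    rw [LinearMap.sub_apply, h g z hz, sub_self]) x
  rw [LinearMap.sub_apply, sub_eq_zero] at h2
  exact h2

theorem gproj_mem_of_mem_iSup (P : G → Submodule k A) (hP : ∀ h, P h ≤ 𝒜 h)
    {x : A} (hx : x ∈ ⨆ h, P h) (g : G) : gproj 𝒜 hint g x ∈ P g := by
  refine Submodule.iSup_induction P (motive := fun z => gproj 𝒜 hint g z ∈ P g) hx ?_ ?_ ?_
  · intro h z hz
    show gproj 𝒜 hint g z ∈ P g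
    by_cases hne : h = g
    · subst hne; rw [gproj_of_mem 𝒜 hint (hP h hz)]; exact hz
    · rw [gproj_of_mem_ne 𝒜 hint (hP h hz) hne]; exact zero_mem _
  · show gproj 𝒜 hint g 0 ∈ P g
    rw [map_zero]; exact zero_mem _
  · intro a b ha hb
    show gproj 𝒜 hint g (a + b) ∈ P g
    rw [map_add]; exact add_mem ha hb

include hint in
theorem leftMul_mem_of_homog {J : Submodule k A}
    (h : ∀ m, ∀ a ∈ 𝒜 m, ∀ z ∈ J, a * z ∈ J) :
    ∀ a : A, ∀ z ∈ J, a * z ∈ J := by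
  intro a z hz
  have ha : a ∈ ⨆ g, 𝒜 g := by rw [hint.submodule_iSup_eq_top]; trivial
  refine Submodule.iSup_induction 𝒜 (motive := fun b => b * z ∈ J) ha
    (fun m b hb => h m b hb z hz) ?_ ?_
  · show (0:A) * z ∈ J
    rw [zero_mul]; exact zero_mem _
  · intro b c hb hc
    show (b + c) * z ∈ J
    rw [add_mul]; exact add_mem hb hc


include hint in
theorem key_frobenius [FiniteDimensional k A]
    (hmul : ∀ {g h : G}, ∀ a ∈ 𝒜 g, ∀ b ∈ 𝒜 h, a * b ∈ 𝒜 (g * h))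
    (lam : A →ₗ[k] k)
    (h1 : ∀ g : G, g ≠ 1 → ∀ z ∈ 𝒜 g, lam z = 0)
    (h2 : ∀ g : G, ∀ x ∈ 𝒜 g, x ≠ 0 → ∃ y ∈ 𝒜 g⁻¹, lam (y * x) ≠ 0) :
    IsSigmaGradedFrobenius 𝒜 1 := by
  set φ₀ : A →ₗ[k] Module.Dual k A :=
    { toFun := fun x => lam ∘ₗ LinearMap.mulRight k x
      map_add' := fun x y => by ext z; simp [mul_add]
      map_smul' := fun c x => by ext z; simp [mul_smul_comm] } with hφ₀
  have hφ₀app : ∀ x y : A, φ₀ x y = lam (y * x) := fun x y => rfl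
  have hinj : Function.Injective φ₀ := by
    rw [injective_iff_map_eq_zero]
    intro x hx
    apply eq_zero_of_gproj_eq_zero 𝒜 hint
    intro g
    by_contra hgx
    obtain ⟨y, hy, hne⟩ := h2 g _ (gproj_mem 𝒜 hint g x) hgx
    have heq : lam (y * x) = lam (y * gproj 𝒜 hint g x) := by
      refine ext_eq 𝒜 hint (lam ∘ₗ LinearMap.mulLeft k y)
        ((lam ∘ₗ LinearMap.mulLeft k y) ∘ₗ gproj 𝒜 hint g) ?_ x
      intro h z hz
      by_cases hhg : h = g
      · subst hhg
        simp [gproj_of_mem 𝒜 hint hz]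
      · have hz2 : y * z ∈ 𝒜 (g⁻¹ * h) := hmul y hy z hz
        have hne1 : g⁻¹ * h ≠ 1 := fun e => hhg (inv_mul_eq_one.mp e).symm
        have hz3 : lam (y * z) = 0 := h1 _ hne1 _ hz2
        simp [gproj_of_mem_ne 𝒜 hint hz hhg, hz3]
    have : lam (y * x) = 0 := by rw [← hφ₀app, hx]; rfl
    rw [heq] at this
    exact hne (by rw [← this])
  have hsurj : Function.Surjective φ₀ :=
    (LinearMap.injective_iff_surjective_of_finrank_eq_finrank
      (Subspace.dual_finrank_eq (K := k) (V := A)).symm).mp hinj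
  refine ⟨LinearEquiv.ofBijective φ₀ ⟨hinj, hsurj⟩, ?_, ?_⟩
  · intro a x y
    show φ₀ (a * x) y = φ₀ x (y * a)
    rw [hφ₀app, hφ₀app, mul_assoc]
  · intro g x hx
    show ∀ h : G, h ≠ g⁻¹ → ∀ z ∈ 𝒜 h, φ₀ x z = 0
    intro h hh z hz
    rw [hφ₀app]
    have hzx : z * x ∈ 𝒜 (h * (g * 1)) := hmul z hz x hx
    refine h1 _ ?_ _ hzx
    rw [mul_one]
    intro e; exact hh (eq_inv_of_mul_eq_one_left e)

include hint in
theorem semisimple_frobenius [FiniteDimensional k A]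
    (hone : (1 : A) ∈ 𝒜 1)
    (hmul : ∀ {g h : G}, ∀ a ∈ 𝒜 g, ∀ b ∈ 𝒜 h, a * b ∈ 𝒜 (g * h))
    (H : ∃ (ι : Type) (_ : DecidableEq ι) (I : ι → Submodule k A),
        DirectSum.IsInternal I ∧
        ∀ i : ι,
          (∀ a : A, ∀ x ∈ I i, a * x ∈ I i) ∧
          (I i = ⨆ g : G, I i ⊓ 𝒜 g) ∧
          I i ≠ ⊥ ∧
          (∀ J : Submodule k A,
            (∀ a : A, ∀ x ∈ J, a * x ∈ J) →
            (J = ⨆ g : G, J ⊓ 𝒜 g) →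
            J < I i → J = ⊥)) :
    IsSigmaGradedFrobenius 𝒜 1 := by
  classical
  obtain ⟨ι, _inst, I, hI, hIp⟩ := H
  set eI := LinearEquiv.ofBijective (DirectSum.coeLinearMap I) hI with heI
  set c := eI.symm 1 with hc
  set s : Finset ι := DFinsupp.support c with hs
  set f : ι → A := fun i => gproj 𝒜 hint 1 ((c i : A)) with hf
  have hc_sum : ∑ i ∈ s, ((c i : A)) = 1 := by
    have h1 : (DirectSum.coeLinearMap I) c = 1 := eI.apply_symm_apply 1
    rw [DirectSum.coeLinearMap_eq_dfinsuppSum] at h1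
    exact h1
  have hIgr : ∀ i : ι, ∀ x ∈ I i, ∀ g, gproj 𝒜 hint g x ∈ I i := by
    intro i x hx g
    have hx2 : x ∈ ⨆ h : G, I i ⊓ 𝒜 h := by rw [← (hIp i).2.1]; exact hx
    exact (gproj_mem_of_mem_iSup 𝒜 hint (fun h => I i ⊓ 𝒜 h) (fun h => inf_le_right) hx2 g).1
  have hfI : ∀ i, f i ∈ I i := fun i => hIgr i _ (c i).2 1
  have hf𝒜 : ∀ i, f i ∈ 𝒜 1 := fun i => gproj_mem 𝒜 hint 1 _
  have hf_sum : ∑ i ∈ s, f i = 1 := by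
    rw [hf, ← map_sum, hc_sum, gproj_of_mem 𝒜 hint hone]
  have hf_zero : ∀ i, i ∉ s → f i = 0 := by
    intro i hi
    have h0 : c i = 0 := by rwa [← DFinsupp.notMem_support_iff, ← hs]
    simp [hf, h0]
  have hind := hI.submodule_iSupIndep
  have L1 : ∀ j : ι, ∀ z ∈ I j, ∀ i₀ : ι, i₀ ≠ j → z * f i₀ = 0 := by
    intro j z hz i₀ hne
    by_cases hi₀ : i₀ ∈ s
    · have hmem1 : z * f i₀ ∈ I i₀ := (hIp i₀).1 z (f i₀) (hfI i₀)
      have heq : z * f i₀ = z - ∑ i ∈ s.erase i₀, z * f i := by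
        have h3 : ∑ i ∈ s.erase i₀, z * f i + z * f i₀ = ∑ i ∈ s, z * f i :=
          Finset.sum_erase_add s _ hi₀
        have h4 : ∑ i ∈ s, z * f i = z := by rw [← Finset.mul_sum, hf_sum, mul_one]
        rw [h4] at h3
        exact eq_sub_of_add_eq' h3
      have hmem2 : z * f i₀ ∈ ⨆ i, ⨆ (_ : i ≠ i₀), I i := by
        rw [heq]
        refine sub_mem ?_ (Submodule.sum_mem _ fun i hi => ?_)
        · exact Submodule.mem_iSup_of_mem j (Submodule.mem_iSup_of_mem (Ne.symm hne) hz)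
        · exact Submodule.mem_iSup_of_mem i (Submodule.mem_iSup_of_mem
            (Finset.ne_of_mem_erase hi) ((hIp i).1 z (f i) (hfI i)))
      exact Submodule.disjoint_def.mp (hind i₀) _ hmem1 hmem2
    · rw [hf_zero i₀ hi₀, mul_zero]
  have L2 : ∀ j : ι, ∀ z ∈ I j, z * f j = z := by
    intro j z hz
    have hzsum : ∑ i ∈ s, z * f i = z := by rw [← Finset.mul_sum, hf_sum, mul_one]
    by_cases hj : j ∈ s
    · exact ((Finset.sum_eq_single_of_mem j hj (fun i hi hne => L1 j z hz i hne)).symm).trans hzsum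
    · have h0 : ∑ i ∈ s, z * f i = 0 :=
        Finset.sum_eq_zero (fun i hi => L1 j z hz i (fun e => hj (e ▸ hi)))
      rw [h0] at hzsum
      rw [← hzsum, zero_mul]
  have hf_ne : ∀ j, f j ≠ 0 := by
    intro j h0
    refine (hIp j).2.2.1 ?_
    rw [eq_bot_iff]
    intro z hz
    have h2 := L2 j z hz
    rw [h0, mul_zero] at h2
    exact (Submodule.mem_bot k).mpr h2.symm
  have hjs : ∀ j, j ∈ s := fun j => by
    by_contra hj; exact hf_ne j (hf_zero j hj)
  have hff_ne : ∀ i j : ι, j ≠ i → f i * f j = 0 := fun i j hne => L1 i (f i) (hfI i) j hne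
  have hffj : ∀ j, f j * f j = f j := fun j => L2 j (f j) (hfI j)
  have hex : ∀ j : ι, ∃ φ : Module.Dual k A, φ (f j) ≠ 0 := by
    intro j
    by_contra hcon; push_neg at hcon
    exact hf_ne j ((Module.forall_dual_apply_eq_zero_iff k (f j)).mp hcon)
  choose τ hτ using hex
  set lam : A →ₗ[k] k :=
    ∑ l ∈ s, (τ l) ∘ₗ (LinearMap.mulRight k (f l)) ∘ₗ (LinearMap.mulLeft k (f l)) ∘ₗ
      (gproj 𝒜 hint 1) with hlam
  have hlam_apply : ∀ z : A, lam z = ∑ l ∈ s, τ l (f l * gproj 𝒜 hint 1 z * f l) := by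
    intro z
    rw [hlam, LinearMap.sum_apply]
    simp only [LinearMap.comp_apply, LinearMap.mulLeft_apply, LinearMap.mulRight_apply]
  refine key_frobenius 𝒜 hint hmul lam ?_ ?_
  · intro g hg z hz
    rw [hlam_apply]
    refine Finset.sum_eq_zero (fun l hl => ?_)
    rw [gproj_of_mem_ne 𝒜 hint hz hg, mul_zero, zero_mul, map_zero]
  · intro g x hx hxne
    have hxsum : ∑ i ∈ s, x * f i = x := by rw [← Finset.mul_sum, hf_sum, mul_one]
    obtain ⟨j, hjmem, hxj⟩ : ∃ j ∈ s, x * f j ≠ 0 := by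
      by_contra hcon; push_neg at hcon
      exact hxne (by rw [← hxsum]; exact Finset.sum_eq_zero hcon)
    set x' := x * f j with hx'
    have hx'I : x' ∈ I j := (hIp j).1 x (f j) (hfI j)
    have hx'𝒜 : x' ∈ 𝒜 g := by
      have h2 := hmul x hx (f j) (hf𝒜 j); rwa [mul_one] at h2
    -- STEP A: find y with f j * (y * x') ≠ 0
    have SA : ∃ y ∈ 𝒜 g⁻¹, f j * (y * x') ≠ 0 := by
      by_contra hcon; push_neg at hcon
      set Q : G → Submodule k A := fun h =>
        ⨅ y : (𝒜 h⁻¹), LinearMap.ker ((LinearMap.mulLeft k (f j)) ∘ₗ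
          (LinearMap.mulLeft k (y : A))) with hQ
      have hQmem : ∀ (h : G) (z : A), z ∈ Q h ↔ ∀ y ∈ 𝒜 h⁻¹, f j * (y * z) = 0 := by
        intro h z
        simp only [hQ, Submodule.mem_iInf, LinearMap.mem_ker, LinearMap.comp_apply,
          LinearMap.mulLeft_apply]
        exact ⟨fun hq y hy => hq ⟨y, hy⟩, fun hq y => hq y y.2⟩
      set P : G → Submodule k A := fun h => (I j ⊓ 𝒜 h) ⊓ Q h with hP
      set J : Submodule k A := ⨆ h, P h with hJ
      have hP𝒜 : ∀ h, P h ≤ 𝒜 h := fun h => inf_le_left.trans inf_le_right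
      have hPI : ∀ h, P h ≤ I j := fun h => inf_le_left.trans inf_le_left
      have hPJ : ∀ h, P h ≤ J := fun h => by rw [hJ]; exact le_iSup P h
      have hJlhom : ∀ m : G, ∀ a ∈ 𝒜 m, ∀ z ∈ J, a * z ∈ J := by
        intro m a ha z hz
        rw [hJ] at hz
        refine Submodule.iSup_induction P (motive := fun z => a * z ∈ J) hz ?_ ?_ ?_
        · intro h z hzP
          show a * z ∈ J
          have h1 : a * z ∈ I j := (hIp j).1 a z (hPI h hzP)
          have h2 : a * z ∈ 𝒜 (m * h) := hmul a ha z (hP𝒜 h hzP)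
          have h3 : a * z ∈ Q (m * h) := by
            refine (hQmem (m * h) (a * z)).mpr (fun y hy => ?_)
            have hy2 : y * a ∈ 𝒜 ((m * h)⁻¹ * m) := hmul y hy a ha
            have he : (m * h)⁻¹ * m = h⁻¹ := by group
            rw [he] at hy2
            have h4 := (hQmem h z).mp hzP.2 (y * a) hy2
            rw [← mul_assoc y a z]
            exact h4
          exact hPJ (m * h) ⟨⟨h1, h2⟩, h3⟩
        · show a * 0 ∈ J; rw [mul_zero]; exact zero_mem _
        · intro u w hu hw; show a * (u + w) ∈ J; rw [mul_add]; exact add_mem hu hw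
      have hJl : ∀ a : A, ∀ z ∈ J, a * z ∈ J := leftMul_mem_of_homog 𝒜 hint hJlhom
      have hJgr : J = ⨆ h, J ⊓ 𝒜 h := by
        refine le_antisymm ?_ (iSup_le fun h => inf_le_left)
        conv_lhs => rw [hJ]
        exact iSup_le fun h => le_iSup_of_le h (le_inf (hPJ h) (hP𝒜 h))
      have hx'J : x' ∈ J := by
        exact hPJ g ⟨⟨hx'I, hx'𝒜⟩, (hQmem g x').mpr (fun y hy => hcon y hy)⟩
      have hJne : J ≠ ⊥ := by
        intro hbot; rw [hbot] at hx'J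
        exact hxj (by simpa using hx'J)
      have hJle : J ≤ I j := by rw [hJ]; exact iSup_le hPI
      have hJI : J = I j := by
        rcases hJle.lt_or_eq with hlt | heq
        · exact absurd ((hIp j).2.2.2 J hJl hJgr hlt) hJne
        · exact heq
      have hfQ : f j ∈ Q 1 := by
        have hfj : f j ∈ ⨆ h, P h := by rw [← hJ, hJI]; exact hfI j
        have h5 := gproj_mem_of_mem_iSup 𝒜 hint P hP𝒜 hfj 1
        rw [gproj_of_mem 𝒜 hint (hf𝒜 j)] at h5
        exact h5.2
      have h6 : f j * (f j * f j) = 0 := by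
        refine (hQmem 1 (f j)).mp hfQ (f j) ?_
        rw [inv_one]; exact hf𝒜 j
      rw [hffj j, hffj j] at h6
      exact hf_ne j h6
    obtain ⟨y, hy𝒜, hv0⟩ := SA
    set v := f j * (y * x') with hv
    have hyx'𝒜 : y * x' ∈ 𝒜 1 := by
      have h2 := hmul y hy𝒜 x' hx'𝒜; rwa [inv_mul_cancel] at h2
    have hv𝒜 : v ∈ 𝒜 1 := by
      have h2 := hmul (f j) (hf𝒜 j) _ hyx'𝒜; rwa [one_mul] at h2
    have hvI : v ∈ I j := (hIp j).1 (f j) _ ((hIp j).1 y x' hx'I)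
    -- STEP B: f j = w * v for some homogeneous w of degree 1
    set P' : G → Submodule k A := fun h => (𝒜 h).map (LinearMap.mulRight k v) with hP'
    set K : Submodule k A := ⨆ h, P' h with hK
    have hP'𝒜 : ∀ h, P' h ≤ 𝒜 h := by
      intro h z hz
      obtain ⟨w, hw, rfl⟩ := Submodule.mem_map.mp hz
      show w * v ∈ 𝒜 h
      have h2 := hmul w hw v hv𝒜
      rwa [mul_one] at h2
    have hP'I : ∀ h, P' h ≤ I j := by
      intro h z hz
      obtain ⟨w, hw, rfl⟩ := Submodule.mem_map.mp hz
      exact (hIp j).1 w v hvI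
    have hP'K : ∀ h, P' h ≤ K := fun h => by rw [hK]; exact le_iSup P' h
    have hKlhom : ∀ m : G, ∀ a ∈ 𝒜 m, ∀ z ∈ K, a * z ∈ K := by
      intro m a ha z hz
      rw [hK] at hz
      refine Submodule.iSup_induction P' (motive := fun z => a * z ∈ K) hz ?_ ?_ ?_
      · intro h z hzP
        show a * z ∈ K
        obtain ⟨w, hw, rfl⟩ := Submodule.mem_map.mp hzP
        refine hP'K (m * h) (Submodule.mem_map.mpr ⟨a * w, hmul a ha w hw, ?_⟩)
        show a * w * v = a * (w * v)
        rw [mul_assoc]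
      · show a * 0 ∈ K; rw [mul_zero]; exact zero_mem _
      · intro u w hu hw; show a * (u + w) ∈ K; rw [mul_add]; exact add_mem hu hw
    have hKl : ∀ a : A, ∀ z ∈ K, a * z ∈ K := leftMul_mem_of_homog 𝒜 hint hKlhom
    have hKgr : K = ⨆ h, K ⊓ 𝒜 h := by
      refine le_antisymm ?_ (iSup_le fun h => inf_le_left)
      conv_lhs => rw [hK]
      exact iSup_le fun h => le_iSup_of_le h (le_inf (hP'K h) (hP'𝒜 h))
    have hvK : v ∈ K := hP'K 1 (Submodule.mem_map.mpr ⟨1, hone, one_mul v⟩)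
    have hKne : K ≠ ⊥ := by
      intro hbot; rw [hbot] at hvK
      exact hv0 (by simpa using hvK)
    have hKle : K ≤ I j := by rw [hK]; exact iSup_le hP'I
    have hKI : K = I j := by
      rcases hKle.lt_or_eq with hlt | heq
      · exact absurd ((hIp j).2.2.2 K hKl hKgr hlt) hKne
      · exact heq
    have hfK : f j ∈ P' 1 := by
      have hfj : f j ∈ ⨆ h, P' h := by rw [← hK, hKI]; exact hfI j
      have h5 := gproj_mem_of_mem_iSup 𝒜 hint P' hP'𝒜 hfj 1
      rwa [gproj_of_mem 𝒜 hint (hf𝒜 j)] at h5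
    obtain ⟨w, hw𝒜, hwv⟩ := Submodule.mem_map.mp hfK
    have hwv' : w * v = f j := hwv
    -- the final element
    set y'' := f j * (w * (f j * y)) with hy''
    have hy''𝒜 : y'' ∈ 𝒜 g⁻¹ := by
      have h2 := hmul (f j) (hf𝒜 j) _ (hmul w hw𝒜 _ (hmul (f j) (hf𝒜 j) y hy𝒜))
      rwa [one_mul, one_mul, one_mul] at h2
    refine ⟨y'', hy''𝒜, ?_⟩
    have hy''x : y'' * x ∈ 𝒜 1 := by
      have h2 := hmul y'' hy''𝒜 x hx; rwa [inv_mul_cancel] at h2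
    have hproj : gproj 𝒜 hint 1 (y'' * x) = y'' * x := gproj_of_mem 𝒜 hint hy''x
    rw [hlam_apply, Finset.sum_eq_single_of_mem j (hjs j) ?side]
    case side =>
      intro l hl hlj
      rw [hproj]
      have hfly'' : f l * y'' = 0 := by
        rw [hy'', ← mul_assoc, hff_ne l j (Ne.symm hlj), zero_mul]
      have h7 : f l * (y'' * x) = 0 := by
        rw [← mul_assoc, hfly'', zero_mul]
      rw [h7, zero_mul, map_zero]
    rw [hproj]
    have hcalc : f j * (y'' * x) * f j = f j := by
      rw [hy'']
      simp only [mul_assoc]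
      rw [← hx', ← hv, hwv', hffj j, hffj j]
    rw [hcalc]
    exact hτ j

end Aux

/-- every finite dimensional graded semisimple `G`-graded algebra (a
direct sum of minimal graded left ideals) is graded Frobenius; in particular every
finite dimensional `G`-graded division algebra (every nonzero homogeneous element is
invertible) is graded Frobenius. -/
theorem gradedSemisimple_and_gradedDivision_gradedFrobenius
    {k A : Type*} [Field k] [Ring A] [Algebra k A] [FiniteDimensional k A]
    {G : Type*} [Group G] [DecidableEq G]
    (𝒜 : G → Submodule k A)
    (hinternal : DirectSum.IsInternal 𝒜)
    (hone : (1 : A) ∈ 𝒜 1)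
    (hmul : ∀ {g h : G}, ∀ a ∈ 𝒜 g, ∀ b ∈ 𝒜 h, a * b ∈ 𝒜 (g * h)) :
    ((∃ (ι : Type) (_ : DecidableEq ι) (I : ι → Submodule k A),
        DirectSum.IsInternal I ∧
        ∀ i : ι,
          (∀ a : A, ∀ x ∈ I i, a * x ∈ I i) ∧
          (I i = ⨆ g : G, I i ⊓ 𝒜 g) ∧
          I i ≠ ⊥ ∧
          (∀ J : Submodule k A,
            (∀ a : A, ∀ x ∈ J, a * x ∈ J) →
            (J = ⨆ g : G, J ⊓ 𝒜 g) →
            J < I i → J = ⊥)) →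
      IsSigmaGradedFrobenius 𝒜 (1 : G)) ∧
    ((∀ g : G, ∀ a ∈ 𝒜 g, a ≠ 0 → IsUnit a) →
      IsSigmaGradedFrobenius 𝒜 (1 : G)) := by
  constructor
  · intro H
    exact semisimple_frobenius 𝒜 hinternal hone hmul H
  · intro hdiv
    rcases subsingleton_or_nontrivial A with hs | hn
    · refine key_frobenius 𝒜 hinternal hmul 0 (fun g hg z hz => rfl) ?_
      intro g x hx hxne
      exact absurd (Subsingleton.elim x 0) hxne
    · obtain ⟨τ, hτ⟩ : ∃ τ : Module.Dual k A, τ 1 ≠ 0 := by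
        by_contra hc; push_neg at hc
        exact one_ne_zero ((Module.forall_dual_apply_eq_zero_iff k (1:A)).mp hc)
      refine key_frobenius 𝒜 hinternal hmul (τ ∘ₗ gproj 𝒜 hinternal 1) ?_ ?_
      · intro g hg z hz
        simp [gproj_of_mem_ne 𝒜 hinternal hz hg]
      · intro g x hx hxne
        obtain ⟨u, hu⟩ := (hdiv g x hx hxne).exists_left_inv
        refine ⟨gproj 𝒜 hinternal g⁻¹ u, gproj_mem 𝒜 hinternal g⁻¹ u, ?_⟩
        have hyx : gproj 𝒜 hinternal g⁻¹ u * x = gproj 𝒜 hinternal 1 (u * x) := by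
          refine ext_eq 𝒜 hinternal
            ((LinearMap.mulRight k x) ∘ₗ gproj 𝒜 hinternal g⁻¹)
            ((gproj 𝒜 hinternal 1) ∘ₗ (LinearMap.mulRight k x)) ?_ u
          intro h z hz
          simp only [LinearMap.comp_apply, LinearMap.mulRight_apply]
          by_cases hh : h = g⁻¹
          · subst hh
            have hzx : z * x ∈ 𝒜 1 := by
              have h2 := hmul z hz x hx; rwa [inv_mul_cancel] at h2
            rw [gproj_of_mem 𝒜 hinternal hz, gproj_of_mem 𝒜 hinternal hzx]
          · have hzx : z * x ∈ 𝒜 (h * g) := hmul z hz x hx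
            have hne1 : h * g ≠ 1 := fun e => hh (eq_inv_of_mul_eq_one_left e)
            rw [gproj_of_mem_ne 𝒜 hinternal hz hh,
              gproj_of_mem_ne 𝒜 hinternal hzx hne1, zero_mul]
        have h1 : gproj 𝒜 hinternal g⁻¹ u * x = 1 := by
          rw [hyx, hu, gproj_of_mem 𝒜 hinternal hone]
        rw [LinearMap.comp_apply, h1, gproj_of_mem 𝒜 hinternal hone]
        exact hτ
end

section
/- Let A be a finite dimensional G-graded algebra such that A is a Frobenius algebra and A_e is a local ring. Then there exists σ ∈ G such that A is σ-graded Frobenius. -/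
set_option maxHeartbeats 1000000


theorem gradeOne_mul_mem {k A : Type*} [Field k] [Ring A] [Algebra k A]
    {G : Type*} [Group G] (𝒜 : G → Submodule k A)
    (hmul : ∀ {g h : G}, ∀ a ∈ 𝒜 g, ∀ b ∈ 𝒜 h, a * b ∈ 𝒜 (g * h))
    {a b : A} (ha : a ∈ 𝒜 1) (hb : b ∈ 𝒜 1) : a * b ∈ 𝒜 1 := by
  simpa using hmul a ha b hb

theorem gradeOne_algebraMap_mem {k A : Type*} [Field k] [Ring A] [Algebra k A]
    {G : Type*} [Group G] (𝒜 : G → Submodule k A)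
    (hone : (1 : A) ∈ 𝒜 1) (r : k) : algebraMap k A r ∈ 𝒜 1 := by
  rw [Algebra.algebraMap_eq_smul_one]
  exact Submodule.smul_mem _ r hone

/-- The identity component `A_e` of a `G`-graded algebra, as a subalgebra of `A`. -/
def gradeOneSubalgebra {k A : Type*} [Field k] [Ring A] [Algebra k A]
    {G : Type*} [Group G] (𝒜 : G → Submodule k A)
    (hone : (1 : A) ∈ 𝒜 1)
    (hmul : ∀ {g h : G}, ∀ a ∈ 𝒜 g, ∀ b ∈ 𝒜 h, a * b ∈ 𝒜 (g * h)) :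
    Subalgebra k A where
  carrier := 𝒜 1
  add_mem' := fun ha hb => add_mem ha hb
  mul_mem' := fun ha hb => gradeOne_mul_mem 𝒜 hmul ha hb
  algebraMap_mem' := fun r => gradeOne_algebraMap_mem 𝒜 hone r

section Aux
variable {k A : Type*} [Field k] [Ring A] [Algebra k A] [FiniteDimensional k A]
    {G : Type*} [Group G] [DecidableEq G]
    (𝒜 : G → Submodule k A)
    (hinternal : DirectSum.IsInternal 𝒜)

/-- The decomposition of `A` into its graded pieces. -/
noncomputable def frobAuxD : A ≃ₗ[k] DirectSum G (fun g => 𝒜 g) :=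
  (LinearEquiv.ofBijective (DirectSum.coeLinearMap 𝒜) hinternal).symm

/-- Projection onto the degree-`g` component. -/
noncomputable def frobAuxPr (g : G) : A →ₗ[k] A :=
  (𝒜 g).subtype ∘ₗ (DirectSum.component k G (fun g => 𝒜 g) g) ∘ₗ
    (frobAuxD 𝒜 hinternal).toLinearMap

theorem frobAuxPr_mem (g : G) (x : A) : frobAuxPr 𝒜 hinternal g x ∈ 𝒜 g :=
  ((frobAuxD 𝒜 hinternal x) g).2

theorem frobAuxPr_same {g : G} {x : A} (hx : x ∈ 𝒜 g) : frobAuxPr 𝒜 hinternal g x = x := by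
  have := hinternal.ofBijective_coeLinearMap_of_mem (i := g) hx
  show ((frobAuxD 𝒜 hinternal x) g : A) = x
  rw [show frobAuxD 𝒜 hinternal x g = ⟨x, hx⟩ from this]

theorem frobAuxPr_ne {g h : G} {x : A} (hx : x ∈ 𝒜 h) (hne : h ≠ g) :
    frobAuxPr 𝒜 hinternal g x = 0 := by
  have := hinternal.ofBijective_coeLinearMap_of_mem_ne (i := h) (j := g) hne hx
  show ((frobAuxD 𝒜 hinternal x) g : A) = 0
  rw [show frobAuxD 𝒜 hinternal x g = 0 from this]; rfl

theorem frobAuxPr_sum (x : A) : ∃ s : Finset G, ∑ g ∈ s, frobAuxPr 𝒜 hinternal g x = x := by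
  classical
  refine ⟨(frobAuxD 𝒜 hinternal x).support, ?_⟩
  have h1 : DirectSum.coeLinearMap 𝒜 (frobAuxD 𝒜 hinternal x) = x :=
    (LinearEquiv.ofBijective (DirectSum.coeLinearMap 𝒜) hinternal).apply_symm_apply x
  conv_rhs => rw [← h1, ← DirectSum.sum_support_of (frobAuxD 𝒜 hinternal x)]
  rw [map_sum]
  exact Finset.sum_congr rfl fun g _ => (DirectSum.coeLinearMap_of 𝒜 g _).symm

theorem frobAuxPr_mul (hmul : ∀ {g h : G}, ∀ a ∈ 𝒜 g, ∀ b ∈ 𝒜 h, a * b ∈ 𝒜 (g * h))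
    {h : G} {a : A} (ha : a ∈ 𝒜 h) (m : G) (x : A) :
    frobAuxPr 𝒜 hinternal m (a * x) = a * frobAuxPr 𝒜 hinternal (h⁻¹ * m) x := by
  have hx : x ∈ ⨆ g, 𝒜 g := by rw [hinternal.submodule_iSup_eq_top]; trivial
  refine Submodule.iSup_induction 𝒜 (motive := fun x =>
    frobAuxPr 𝒜 hinternal m (a * x) = a * frobAuxPr 𝒜 hinternal (h⁻¹ * m) x) hx ?_ ?_ ?_
  · intro d x hxd
    by_cases hm : m = h * d
    · subst hm
      rw [frobAuxPr_same 𝒜 hinternal (hmul a ha x hxd),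
        show h⁻¹ * (h * d) = d by group, frobAuxPr_same 𝒜 hinternal hxd]
    · rw [frobAuxPr_ne 𝒜 hinternal (hmul a ha x hxd) (fun hc => hm hc.symm),
        frobAuxPr_ne 𝒜 hinternal hxd (fun hc => hm (by rw [hc, mul_inv_cancel_left])), mul_zero]
  · simp
  · intro x y hx hy
    rw [mul_add, map_add, map_add, hx, hy, mul_add]

variable (f : Module.Dual k A)

/-- The kernel of the degree-`g` homogeneous component of the Frobenius form. -/
noncomputable def frobL (g : G) : Submodule k A where
  carrier := {x | ∀ y : A, f (frobAuxPr 𝒜 hinternal g (y * x)) = 0}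
  add_mem' := by
    intro x₁ x₂ h1 h2 y
    rw [mul_add, map_add, map_add, h1 y, h2 y, add_zero]
  zero_mem' := by intro y; rw [mul_zero, map_zero, map_zero]
  smul_mem' := by
    intro c x hx y
    rw [mul_smul_comm, map_smul, map_smul, hx y, smul_zero]

theorem frobL_mem {g : G} {x : A} :
    x ∈ frobL 𝒜 hinternal f g ↔ ∀ y : A, f (frobAuxPr 𝒜 hinternal g (y * x)) = 0 :=
  Iff.rfl

theorem frobL_left {g : G} (a : A) {x : A} (hx : x ∈ frobL 𝒜 hinternal f g) :
    a * x ∈ frobL 𝒜 hinternal f g := by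
  intro y
  rw [← mul_assoc]
  exact hx (y * a)

theorem frobL_graded (hmul : ∀ {g h : G}, ∀ a ∈ 𝒜 g, ∀ b ∈ 𝒜 h, a * b ∈ 𝒜 (g * h))
    {g : G} (d : G) {x : A} (hx : x ∈ frobL 𝒜 hinternal f g) :
    frobAuxPr 𝒜 hinternal d x ∈ frobL 𝒜 hinternal f g := by
  intro y
  obtain ⟨s, hs⟩ := frobAuxPr_sum 𝒜 hinternal y
  rw [← hs, Finset.sum_mul, map_sum, map_sum]
  refine Finset.sum_eq_zero fun h _ => ?_
  by_cases hcase : h * d = g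
  · have hmem : frobAuxPr 𝒜 hinternal h y * frobAuxPr 𝒜 hinternal d x ∈ 𝒜 g :=
      hcase ▸ hmul _ (frobAuxPr_mem 𝒜 hinternal h y) _ (frobAuxPr_mem 𝒜 hinternal d x)
    rw [frobAuxPr_same 𝒜 hinternal hmem]
    have h2 := frobAuxPr_mul 𝒜 hinternal hmul (frobAuxPr_mem 𝒜 hinternal h y) g x
    have hd : h⁻¹ * g = d := by rw [← hcase, inv_mul_cancel_left]
    rw [hd] at h2
    rw [← h2]
    exact hx (frobAuxPr 𝒜 hinternal h y)
  · rw [frobAuxPr_ne 𝒜 hinternal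
      (hmul _ (frobAuxPr_mem 𝒜 hinternal h y) _ (frobAuxPr_mem 𝒜 hinternal d x)) hcase,
      map_zero]

/-- The right annihilator of `frobL g`. -/
noncomputable def frobN (g : G) : Submodule k A where
  carrier := {y | ∀ x ∈ frobL 𝒜 hinternal f g, x * y = 0}
  add_mem' := by
    intro y₁ y₂ h1 h2 x hx
    rw [mul_add, h1 x hx, h2 x hx, add_zero]
  zero_mem' := by intro x _; rw [mul_zero]
  smul_mem' := by
    intro c y hy x hx
    rw [mul_smul_comm, hy x hx, smul_zero]

theorem frobN_mem {g : G} {y : A} :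
    y ∈ frobN 𝒜 hinternal f g ↔ ∀ x ∈ frobL 𝒜 hinternal f g, x * y = 0 :=
  Iff.rfl

end Aux

/-- Main auxiliary result: if `A_e` is local, some homogeneous component of the
Frobenius form is nondegenerate. -/
theorem frobExistsBot
    {k A : Type*} [Field k] [Ring A] [Algebra k A] [FiniteDimensional k A]
    {G : Type*} [Group G] [DecidableEq G]
    (𝒜 : G → Submodule k A)
    (hinternal : DirectSum.IsInternal 𝒜)
    (hone : (1 : A) ∈ 𝒜 1)
    (hmul : ∀ {g h : G}, ∀ a ∈ 𝒜 g, ∀ b ∈ 𝒜 h, a * b ∈ 𝒜 (g * h))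
    (hlocal : IsLocalRing ↥(gradeOneSubalgebra 𝒜 hone hmul))
    (φ : A ≃ₗ[k] Module.Dual k A)
    (key : ∀ x y : A, φ x y = (φ 1) (y * x)) :
    ∃ g₀ : G, frobL 𝒜 hinternal (φ 1) g₀ = ⊥ := by
  classical
  haveI := hlocal
  by_contra hex
  push_neg at hex
  set f : Module.Dual k A := φ 1 with hfdef
  -- A is nontrivial
  have hA10 : (1 : A) ≠ 0 := by
    intro h10
    have h1 : ((1 : ↥(gradeOneSubalgebra 𝒜 hone hmul)) : A) =
        ((0 : ↥(gradeOneSubalgebra 𝒜 hone hmul)) : A) := by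
      rw [OneMemClass.coe_one, ZeroMemClass.coe_zero, h10]
    exact one_ne_zero (Subtype.ext h1)
  -- the collection of proper graded right ideals
  set RI : Set (Submodule k A) := {W | (∀ w ∈ W, ∀ a : A, w * a ∈ W) ∧
    (∀ w ∈ W, ∀ g : G, frobAuxPr 𝒜 hinternal g w ∈ W) ∧ (1 : A) ∉ W} with hRIdef
  have hbot : (⊥ : Submodule k A) ∈ RI := by
    refine ⟨?_, ?_, ?_⟩
    · intro w hw a
      rw [Submodule.mem_bot] at hw ⊢
      rw [hw, zero_mul]
    · intro w hw g
      rw [Submodule.mem_bot] at hw ⊢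
      rw [hw, map_zero]
    · rw [Submodule.mem_bot]
      exact hA10
  have hdir : DirectedOn (· ≤ ·) RI := by
    rintro W₁ ⟨hr₁, hg₁, hp₁⟩ W₂ ⟨hr₂, hg₂, hp₂⟩
    refine ⟨W₁ ⊔ W₂, ⟨?_, ?_, ?_⟩, le_sup_left, le_sup_right⟩
    · intro w hw a
      obtain ⟨w₁, hw₁, w₂, hw₂, rfl⟩ := Submodule.mem_sup.mp hw
      rw [add_mul]
      exact Submodule.add_mem_sup (hr₁ w₁ hw₁ a) (hr₂ w₂ hw₂ a)
    · intro w hw g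
      obtain ⟨w₁, hw₁, w₂, hw₂, rfl⟩ := Submodule.mem_sup.mp hw
      rw [map_add]
      exact Submodule.add_mem_sup (hg₁ w₁ hw₁ g) (hg₂ w₂ hw₂ g)
    · intro h1
      obtain ⟨w₁, hw₁, w₂, hw₂, heq⟩ := Submodule.mem_sup.mp h1
      -- project to degree 1
      have heq1 : frobAuxPr 𝒜 hinternal 1 w₁ + frobAuxPr 𝒜 hinternal 1 w₂ = 1 := by
        have := congrArg (frobAuxPr 𝒜 hinternal 1) heq
        rw [map_add, frobAuxPr_same 𝒜 hinternal hone] at this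
        exact this
      set u₁ : ↥(gradeOneSubalgebra 𝒜 hone hmul) :=
        ⟨frobAuxPr 𝒜 hinternal 1 w₁, frobAuxPr_mem 𝒜 hinternal 1 w₁⟩ with hu₁
      set u₂ : ↥(gradeOneSubalgebra 𝒜 hone hmul) :=
        ⟨frobAuxPr 𝒜 hinternal 1 w₂, frobAuxPr_mem 𝒜 hinternal 1 w₂⟩ with hu₂
      have hadd : u₁ + u₂ = 1 := by
        apply Subtype.ext
        rw [AddMemClass.coe_add, OneMemClass.coe_one]
        exact heq1
      rcases IsLocalRing.isUnit_or_isUnit_of_add_one hadd with hu | hu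
      · obtain ⟨c, hc⟩ := hu.exists_right_inv
        have hcA : frobAuxPr 𝒜 hinternal 1 w₁ * (c : A) = 1 := by
          have := congrArg (Subtype.val) hc
          rw [MulMemClass.coe_mul, OneMemClass.coe_one] at this
          exact this
        apply hp₁
        rw [← hcA]
        exact hr₁ _ (hg₁ w₁ hw₁ 1) (c : A)
      · obtain ⟨c, hc⟩ := hu.exists_right_inv
        have hcA : frobAuxPr 𝒜 hinternal 1 w₂ * (c : A) = 1 := by
          have := congrArg (Subtype.val) hc
          rw [MulMemClass.coe_mul, OneMemClass.coe_one] at this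
          exact this
        apply hp₂
        rw [← hcA]
        exact hr₂ _ (hg₂ w₂ hw₂ 1) (c : A)
  set J : Submodule k A := sSup RI with hJdef
  have h1J : (1 : A) ∉ J := by
    intro h1
    obtain ⟨W, hW, h1W⟩ := (Submodule.mem_sSup_of_directed ⟨⊥, hbot⟩ hdir).mp h1
    exact hW.2.2 h1W
  have hJtop : J ≠ ⊤ := fun h => h1J (h ▸ Submodule.mem_top)
  -- each frobN belongs to RI
  have hNRI : ∀ g : G, frobN 𝒜 hinternal f g ∈ RI := by
    intro g
    refine ⟨?_, ?_, ?_⟩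
    · intro w hw a x hx
      rw [← mul_assoc, hw x hx, zero_mul]
    · intro w hw d x hx
      obtain ⟨s, hs⟩ := frobAuxPr_sum 𝒜 hinternal x
      rw [← hs, Finset.sum_mul]
      refine Finset.sum_eq_zero fun h _ => ?_
      have h2 := frobAuxPr_mul 𝒜 hinternal hmul (frobAuxPr_mem 𝒜 hinternal h x) (h * d) w
      rw [inv_mul_cancel_left] at h2
      rw [← h2, hw _ (frobL_graded 𝒜 hinternal f hmul h hx), map_zero]
    · intro h1
      apply hex g
      rw [eq_bot_iff]
      intro x hx
      rw [Submodule.mem_bot]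
      have := h1 x hx
      rwa [mul_one] at this
  have hNJ : ∀ g : G, frobN 𝒜 hinternal f g ≤ J := fun g => le_sSup (hNRI g)
  -- frobN is the φ-preimage of the dual annihilator of frobL
  have hNperp : ∀ g : G, frobN 𝒜 hinternal f g =
      Submodule.comap (φ : A →ₗ[k] Module.Dual k A)
        (Submodule.dualAnnihilator (frobL 𝒜 hinternal f g)) := by
    intro g
    ext y
    rw [frobN_mem, Submodule.mem_comap, Submodule.mem_dualAnnihilator]
    constructor
    · intro hy x hx
      rw [LinearEquiv.coe_coe, key y x, hy x hx, map_zero]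
    · intro hy x hx
      have hphi : φ (x * y) = 0 := by
        apply LinearMap.ext
        intro a
        rw [key (x * y) a, LinearMap.zero_apply, ← mul_assoc]
        have := hy (a * x) (frobL_left 𝒜 hinternal f a hx)
        rw [LinearEquiv.coe_coe, key y (a * x)] at this
        exact this
      have := φ.injective (by rw [hphi, map_zero] : φ (x * y) = φ 0)
      exact this
  -- dimension count for frobN
  have hrankN : ∀ g : G, Module.finrank k (frobL 𝒜 hinternal f g) +
      Module.finrank k (frobN 𝒜 hinternal f g) = Module.finrank k A := by
    intro g
    rw [hNperp g, Submodule.comap_equiv_eq_map_symm]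
    rw [LinearEquiv.finrank_map_eq]
    have e2 : Module.finrank k (Submodule.dualAnnihilator (frobL 𝒜 hinternal f g)) =
        Module.finrank k (A ⧸ frobL 𝒜 hinternal f g) :=
      (LinearEquiv.finrank_eq (Subspace.quotEquivAnnihilator (frobL 𝒜 hinternal f g))).symm
    rw [e2, add_comm]
    exact Submodule.finrank_quotient_add_finrank _
  -- the subspace orthogonal to J
  set S : Submodule k A := Submodule.dualCoannihilator
    (Submodule.map (φ : A →ₗ[k] Module.Dual k A) J) with hSdef
  have hSmem : ∀ {x : A}, x ∈ S ↔ ∀ y ∈ J, φ y x = 0 := by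
    intro x
    rw [hSdef, Submodule.mem_dualCoannihilator]
    constructor
    · intro hx y hy
      exact hx (φ y) (Submodule.mem_map_of_mem hy)
    · rintro hx ψ ⟨y, hy, rfl⟩
      exact hx y hy
  -- S is contained in every frobL
  have hSL : ∀ g : G, S ≤ frobL 𝒜 hinternal f g := by
    intro g
    have step1 : frobL 𝒜 hinternal f g ≤ Submodule.dualCoannihilator
        (Submodule.map (φ : A →ₗ[k] Module.Dual k A) (frobN 𝒜 hinternal f g)) := by
      intro x hx
      rw [Submodule.mem_dualCoannihilator]
      rintro ψ ⟨y, hy, rfl⟩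
      rw [LinearEquiv.coe_coe, key y x, hy x hx, map_zero]
    have step2 : Module.finrank k (Submodule.dualCoannihilator
        (Submodule.map (φ : A →ₗ[k] Module.Dual k A) (frobN 𝒜 hinternal f g))) =
        Module.finrank k (frobL 𝒜 hinternal f g) := by
      have e1 := Subspace.finrank_add_finrank_dualCoannihilator_eq
        (Submodule.map (φ : A →ₗ[k] Module.Dual k A) (frobN 𝒜 hinternal f g))
      have e3 : Module.finrank k (Submodule.map (φ : A →ₗ[k] Module.Dual k A)
          (frobN 𝒜 hinternal f g)) = Module.finrank k (frobN 𝒜 hinternal f g) :=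
        LinearEquiv.finrank_map_eq φ _
      have e4 := hrankN g
      omega
    have step3 : frobL 𝒜 hinternal f g = Submodule.dualCoannihilator
        (Submodule.map (φ : A →ₗ[k] Module.Dual k A) (frobN 𝒜 hinternal f g)) :=
      Submodule.eq_of_le_of_finrank_le step1 step2.le
    rw [step3]
    intro x hx
    rw [Submodule.mem_dualCoannihilator]
    rintro ψ ⟨y, hy, rfl⟩
    exact (hSmem.mp hx) y (hNJ g hy)
  -- S = ⊥
  have hSbot : S = ⊥ := by
    rw [eq_bot_iff]
    intro x hx
    rw [Submodule.mem_bot]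
    have hphi : φ x = 0 := by
      apply LinearMap.ext
      intro y
      rw [key x y, LinearMap.zero_apply]
      obtain ⟨s, hs⟩ := frobAuxPr_sum 𝒜 hinternal (y * x)
      rw [← hs, map_sum]
      refine Finset.sum_eq_zero fun g _ => ?_
      exact (hSL g hx) y
    exact φ.injective (by rw [hphi, map_zero] : φ x = φ 0)
  -- dimension contradiction
  have h1 := Subspace.finrank_add_finrank_dualCoannihilator_eq
    (Submodule.map (φ : A →ₗ[k] Module.Dual k A) J)
  have h2 : Module.finrank k (Submodule.map (φ : A →ₗ[k] Module.Dual k A) J) =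
      Module.finrank k J := LinearEquiv.finrank_map_eq φ J
  have h3 : Module.finrank k J < Module.finrank k A :=
    Submodule.finrank_lt hJtop
  have h4 : Module.finrank k S = 0 := by rw [hSbot]; exact finrank_bot k A
  rw [← hSdef] at h1
  omega

/-- if a finite dimensional `G`-graded algebra `A` is a Frobenius algebra
(`A ≅ A*` as left `A`-modules) and `A_e` is a local ring, then `A` is `σ`-graded
Frobenius for some `σ ∈ G`. -/
theorem frobenius_local_exists_sigmaGradedFrobenius
    {k A : Type*} [Field k] [Ring A] [Algebra k A] [FiniteDimensional k A]
    {G : Type*} [Group G] [DecidableEq G]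
    (𝒜 : G → Submodule k A)
    (hinternal : DirectSum.IsInternal 𝒜)
    (hone : (1 : A) ∈ 𝒜 1)
    (hmul : ∀ {g h : G}, ∀ a ∈ 𝒜 g, ∀ b ∈ 𝒜 h, a * b ∈ 𝒜 (g * h))
    (hFrob : ∃ φ : A ≃ₗ[k] Module.Dual k A, ∀ a x y : A, φ (a * x) y = φ x (y * a))
    (hlocal : IsLocalRing ↥(gradeOneSubalgebra 𝒜 hone hmul)) :
    ∃ σ : G, IsSigmaGradedFrobenius 𝒜 σ := by
  classical
  obtain ⟨φ, hφ⟩ := hFrob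
  have key : ∀ x y : A, φ x y = (φ 1) (y * x) := by
    intro x y
    simpa using hφ x 1 y
  obtain ⟨g₀, hg₀⟩ := frobExistsBot 𝒜 hinternal hone hmul hlocal φ key
  set f : Module.Dual k A := φ 1 with hfdef
  refine ⟨g₀, ?_⟩
  -- build the homogeneous Frobenius isomorphism
  set ψ₀ : A →ₗ[k] Module.Dual k A :=
    { toFun := fun x => f ∘ₗ (frobAuxPr 𝒜 hinternal g₀) ∘ₗ (LinearMap.mulRight k x)
      map_add' := by
        intro x₁ x₂
        apply LinearMap.ext
        intro y
        simp [LinearMap.mulRight_apply, mul_add]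
      map_smul' := by
        intro c x
        apply LinearMap.ext
        intro y
        simp [LinearMap.mulRight_apply, mul_smul_comm] } with hψ₀def
  have hψ₀apply : ∀ x y : A, ψ₀ x y = f (frobAuxPr 𝒜 hinternal g₀ (y * x)) := fun x y => rfl
  have hinj : Function.Injective ψ₀ := by
    rw [← LinearMap.ker_eq_bot, eq_bot_iff]
    intro x hx
    rw [Submodule.mem_bot]
    rw [LinearMap.mem_ker] at hx
    have hxL : x ∈ frobL 𝒜 hinternal f g₀ := by
      intro y
      rw [← hψ₀apply x y, hx, LinearMap.zero_apply]
    rw [hg₀, Submodule.mem_bot] at hxL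
    exact hxL
  have hbij : Function.Bijective ψ₀ := by
    refine ⟨hinj, ?_⟩
    have hdim : Module.finrank k A = Module.finrank k (Module.Dual k A) :=
      Subspace.dual_finrank_eq.symm
    exact (LinearMap.injective_iff_surjective_of_finrank_eq_finrank hdim).mp hinj
  refine ⟨LinearEquiv.ofBijective ψ₀ hbij, ?_, ?_⟩
  · intro a x y
    rw [LinearEquiv.ofBijective_apply, LinearEquiv.ofBijective_apply,
      hψ₀apply, hψ₀apply, ← mul_assoc]
  · intro g x hx
    intro h hh y hy
    rw [LinearEquiv.ofBijective_apply, hψ₀apply]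
    have hyx : y * x ∈ 𝒜 (h * (g * g₀)) := hmul y hy x hx
    have hne : h * (g * g₀) ≠ g₀ := by
      intro hc
      apply hh
      have : (h * g) * g₀ = 1 * g₀ := by rw [mul_assoc, hc, one_mul]
      have h1 : h * g = 1 := mul_right_cancel this
      exact eq_inv_of_mul_eq_one_left h1
    rw [frobAuxPr_ne 𝒜 hinternal hyx hne, map_zero]
end
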